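/- arXiv:1410.2312 — 4 statements merged into one kernel-verified Lean document; each statement's English description precedes it below -/
import Mathlib

section
/- In the formal power series ring K[[t,u]] in two commuting variables over the field K = ℚ(q) of rational functions in q over ℚ, consider the series (1 − t)·(1 − q⁻¹t)⁻¹·(1 − tu)⁻¹·(1 − u)⁻¹ (the three inverted factors are units since they have constant coefficient 1). Then for all natural numbers i, j with i ≤ j, the coefficient of the monomial t^i·u^{i+j} in this series equals q^{−i}. -/
noncomputable section

/-- The field `K = ℚ(q)` of rational functions over `ℚ`. -/
local notation "K" => RatFunc ℚ

/-- The variable `q` of `K = ℚ(q)`. -/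
local notation "q" => (RatFunc.X : RatFunc ℚ)

open MvPowerSeries Finsupp

namespace GJaux

def e0 : Fin 2 →₀ ℕ := Finsupp.single 0 1
def e1 : Fin 2 →₀ ℕ := Finsupp.single 1 1

def g1 (n : ℕ) : K := if n = 0 then 1 else q⁻¹ ^ n * (1 - q)

def H1 : MvPowerSeries (Fin 2) K := fun d => if d 1 = 0 then g1 (d 0) else 0
def H2 : MvPowerSeries (Fin 2) K := fun d => if d 1 ≤ d 0 then g1 (d 0 - d 1) else 0
def Hf : MvPowerSeries (Fin 2) K :=
  fun d => if d 0 ≤ d 1 then (q⁻¹ : K) ^ (d 0) else (q⁻¹ : K) ^ (d 0) * (1 - q ^ (d 1 + 1))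

lemma coeff_H1 (d : Fin 2 →₀ ℕ) :
    MvPowerSeries.coeff (R := K) d H1 = if d 1 = 0 then g1 (d 0) else 0 := rfl
lemma coeff_H2 (d : Fin 2 →₀ ℕ) :
    MvPowerSeries.coeff (R := K) d H2 = if d 1 ≤ d 0 then g1 (d 0 - d 1) else 0 := rfl
lemma coeff_Hf (d : Fin 2 →₀ ℕ) :
    MvPowerSeries.coeff (R := K) d Hf =
      if d 0 ≤ d 1 then (q⁻¹ : K) ^ (d 0) else (q⁻¹ : K) ^ (d 0) * (1 - q ^ (d 1 + 1)) := rfl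

lemma qne : (q : K) ≠ 0 := RatFunc.X_ne_zero

lemma ext2 {d s : Fin 2 →₀ ℕ} : d = s ↔ d 0 = s 0 ∧ d 1 = s 1 := by
  constructor
  · rintro rfl; exact ⟨rfl, rfl⟩
  · rintro ⟨h0, h1⟩
    ext x
    fin_cases x
    · exact h0
    · exact h1

lemma le2 {s d : Fin 2 →₀ ℕ} : s ≤ d ↔ s 0 ≤ d 0 ∧ s 1 ≤ d 1 := by
  rw [Finsupp.le_def, Fin.forall_fin_two]

lemma e0_apply0 : e0 0 = 1 := by simp [e0]
lemma e0_apply1 : e0 1 = 0 := by simp [e0]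
lemma e1_apply0 : e1 0 = 0 := by simp [e1]
lemma e1_apply1 : e1 1 = 1 := by simp [e1]

lemma keyA (a b : ℕ) :
    (if b = 0 then g1 a else 0)
      - (if 1 ≤ a then (q⁻¹ : K) * (if b = 0 then g1 (a - 1) else 0) else 0)
    = (if a = 0 ∧ b = 0 then 1 else 0) - (if a = 1 ∧ b = 0 then 1 else 0) := by
  by_cases hb : b = 0
  · subst hb
    match a with
    | 0 => simp [g1]
    | 1 =>
      norm_num [g1]
      linear_combination (-1 : K) * mul_inv_cancel₀ qne
    | (n+2) =>
      have h1 : n + 2 ≠ 0 := by omega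
      have h2 : n + 2 ≠ 1 := by omega
      have h3 : n + 2 - 1 = n + 1 := by omega
      simp only [g1, h1, h2, h3, if_false, Nat.succ_ne_zero, Nat.le_add_left, if_true,
        and_true, true_and, if_pos rfl]
      ring
  · simp [hb]

lemma keyB (a b : ℕ) :
    (if b ≤ a then g1 (a - b) else 0)
      - (if 1 ≤ a ∧ 1 ≤ b then (1 : K) * (if b - 1 ≤ a - 1 then g1 (a - 1 - (b - 1)) else 0) else 0)
    = (if b = 0 then g1 a else 0) := by
  match a, b with
  | a, 0 => simp
  | 0, (b+1) => simp
  | (a+1), (b+1) => simp [Nat.succ_le_succ_iff]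

lemma keyC (a b : ℕ) :
    (if a ≤ b then (q⁻¹ : K) ^ a else (q⁻¹ : K) ^ a * (1 - q ^ (b + 1)))
      - (if 1 ≤ b then (1 : K) *
          (if a ≤ b - 1 then (q⁻¹ : K) ^ a else (q⁻¹ : K) ^ a * (1 - q ^ (b - 1 + 1))) else 0)
    = (if b ≤ a then g1 (a - b) else 0) := by
  match b with
  | 0 =>
    match a with
    | 0 => simp [g1]
    | (a+1) => simp [g1]
  | (b+1) =>
    have hq : (q⁻¹ : K) ^ (b+1) * q ^ (b+1) = 1 := by
      rw [← mul_pow, inv_mul_cancel₀ qne, one_pow]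
    simp only [Nat.le_add_left, if_true, Nat.add_sub_cancel, one_mul]
    rcases lt_trichotomy a (b+1) with h | h | h
    · have h1 : a ≤ b := Nat.lt_succ_iff.mp h
      have h2 : a ≤ b + 1 := le_of_lt h
      have h3 : ¬ (b + 1 ≤ a) := by omega
      simp [h1, h2, h3]
    · subst h
      have h1 : ¬ (b + 1 ≤ b) := by omega
      simp only [le_refl, if_true, h1, if_false, Nat.sub_self, g1, if_pos rfl]
      linear_combination hq
    · have h1 : ¬ (a ≤ b + 1) := by omega
      have h2 : ¬ (a ≤ b) := by omega
      have h3 : b + 1 ≤ a := by omega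
      have h4 : a - (b+1) ≠ 0 := by omega
      simp only [h1, if_false, h2, h3, if_true, g1, h4]
      obtain ⟨m, rfl⟩ : ∃ m, a = (b+1) + (m+1) := ⟨a - (b+1) - 1, by omega⟩
      have h5 : (b + 1 + (m + 1)) - (b + 1) = m + 1 := by omega
      rw [h5]
      linear_combination ((q⁻¹ : K) ^ (m+1) * (1 - q)) * hq


lemma stepA : (1 - MvPowerSeries.monomial (R := K) e0 (q⁻¹ : K)) * H1 = 1 - MvPowerSeries.X 0 := by
  ext d
  rw [sub_mul, one_mul, map_sub, map_sub, coeff_monomial_mul, coeff_H1, coeff_H1,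
    MvPowerSeries.coeff_one, MvPowerSeries.coeff_X]
  have hle : (e0 ≤ d) = (1 ≤ d 0) := propext (by rw [le2, e0_apply0, e0_apply1]; simp)
  have h0 : (d - e0) 0 = d 0 - 1 := by rw [Finsupp.tsub_apply, e0_apply0]
  have h1 : (d - e0) 1 = d 1 := by rw [Finsupp.tsub_apply, e0_apply1, Nat.sub_zero]
  have hd0 : (d = 0) = (d 0 = 0 ∧ d 1 = 0) := propext (by rw [ext2]; simp)
  have hde : (d = Finsupp.single 0 1) = (d 0 = 1 ∧ d 1 = 0) := propext (by
    rw [ext2]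
    simp [Finsupp.single_apply])
  simp only [hle, h0, h1, hd0, hde]
  exact keyA (d 0) (d 1)

lemma stepB : (1 - MvPowerSeries.monomial (R := K) (e0 + e1) (1 : K)) * H2 = H1 := by
  ext d
  rw [sub_mul, one_mul, map_sub, coeff_monomial_mul, coeff_H2, coeff_H2, coeff_H1]
  have hle : ((e0 + e1) ≤ d) = (1 ≤ d 0 ∧ 1 ≤ d 1) := propext (by
    rw [le2, Finsupp.add_apply, Finsupp.add_apply, e0_apply0, e0_apply1, e1_apply0, e1_apply1])
  have h0 : (d - (e0 + e1)) 0 = d 0 - 1 := by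
    rw [Finsupp.tsub_apply, Finsupp.add_apply, e0_apply0, e1_apply0]
  have h1 : (d - (e0 + e1)) 1 = d 1 - 1 := by
    rw [Finsupp.tsub_apply, Finsupp.add_apply, e0_apply1, e1_apply1]
  simp only [hle, h0, h1]
  exact keyB (d 0) (d 1)

lemma stepC : (1 - MvPowerSeries.monomial (R := K) e1 (1 : K)) * Hf = H2 := by
  ext d
  rw [sub_mul, one_mul, map_sub, coeff_monomial_mul, coeff_Hf, coeff_Hf, coeff_H2]
  have hle : (e1 ≤ d) = (1 ≤ d 1) := propext (by rw [le2, e1_apply0, e1_apply1]; simp)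
  have h0 : (d - e1) 0 = d 0 := by rw [Finsupp.tsub_apply, e1_apply0, Nat.sub_zero]
  have h1 : (d - e1) 1 = d 1 - 1 := by rw [Finsupp.tsub_apply, e1_apply1]
  simp only [hle, h0, h1]
  exact keyC (d 0) (d 1)

lemma factor1 : (1 - MvPowerSeries.C (σ := Fin 2) (R := K) q⁻¹ * MvPowerSeries.X 0)
    = 1 - MvPowerSeries.monomial (R := K) e0 (q⁻¹ : K) := by
  rw [MvPowerSeries.X_def, ← MvPowerSeries.monomial_zero_eq_C_apply,
    MvPowerSeries.monomial_mul_monomial, zero_add, mul_one]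
  rfl

lemma factor2 : (1 - MvPowerSeries.X 0 * MvPowerSeries.X 1 : MvPowerSeries (Fin 2) K)
    = 1 - MvPowerSeries.monomial (R := K) (e0 + e1) (1 : K) := by
  rw [MvPowerSeries.X_def, MvPowerSeries.X_def, MvPowerSeries.monomial_mul_monomial, mul_one]
  rfl

lemma factor3 : (1 - MvPowerSeries.X 1 : MvPowerSeries (Fin 2) K)
    = 1 - MvPowerSeries.monomial (R := K) e1 (1 : K) := by
  rw [MvPowerSeries.X_def]
  rfl

lemma cc_monomial_ne (e : Fin 2 →₀ ℕ) (he : e ≠ 0) (c : K) :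
    MvPowerSeries.constantCoeff (σ := Fin 2) (R := K) (1 - MvPowerSeries.monomial (R := K) e c) ≠ 0 := by
  rw [map_sub, MvPowerSeries.constantCoeff_one, ← MvPowerSeries.coeff_zero_eq_constantCoeff_apply,
    MvPowerSeries.coeff_monomial, if_neg (by exact fun h => he h.symm)]
  simp

lemma e0_ne : e0 ≠ 0 := by
  intro h
  have := congrArg (fun f => f 0) h
  simp [e0_apply0] at this

lemma e1_ne : e1 ≠ 0 := by
  intro h
  have := congrArg (fun f => f 1) h
  simp [e1_apply1] at this

lemma e01_ne : e0 + e1 ≠ 0 := by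
  intro h
  have := congrArg (fun f => f 0) h
  simp [Finsupp.add_apply, e0_apply0, e1_apply0] at this

lemma inv_step {A H T : MvPowerSeries (Fin 2) K}
    (hA : MvPowerSeries.constantCoeff (σ := Fin 2) (R := K) A ≠ 0) (h : A * H = T) : T * A⁻¹ = H := by
  rw [← h, mul_comm A H, mul_assoc, MvPowerSeries.mul_inv_cancel _ hA, mul_one]

lemma Hf_eq :
    (1 - MvPowerSeries.X 0)
        * (1 - MvPowerSeries.C (σ := Fin 2) (R := K) q⁻¹ * MvPowerSeries.X 0)⁻¹
        * (1 - MvPowerSeries.X 0 * MvPowerSeries.X 1)⁻¹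
        * (1 - MvPowerSeries.X 1)⁻¹ = Hf := by
  rw [factor1, factor2, factor3,
    inv_step (cc_monomial_ne e0 e0_ne _) stepA,
    inv_step (cc_monomial_ne (e0 + e1) e01_ne _) stepB,
    inv_step (cc_monomial_ne e1 e1_ne _) stepC]

end GJaux

/-- The Godement–Jacquet computation for `GL₂`: in `K[[t,u]]`, the coefficient of
`t^i u^(i+j)` (for `i ≤ j`, corresponding to the antidominant coweight `z₁^i z₂^j`
under `z₁ = tu`, `z₂ = u`) of the series
`(1 − t)·(1 − q⁻¹ t)⁻¹·(1 − tu)⁻¹·(1 − u)⁻¹` equals `q^(−i)`. -/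
theorem inverse_satake_std_GL2 (i j : ℕ) (hij : i ≤ j) :
    MvPowerSeries.coeff (R := K) (Finsupp.single (0 : Fin 2) i + Finsupp.single (1 : Fin 2) (i + j))
      ((1 - MvPowerSeries.X 0)
        * (1 - MvPowerSeries.C (σ := Fin 2) (R := K) q⁻¹ * MvPowerSeries.X 0)⁻¹
        * (1 - MvPowerSeries.X 0 * MvPowerSeries.X 1)⁻¹
        * (1 - MvPowerSeries.X 1)⁻¹)
      = q⁻¹ ^ i := by
  rw [GJaux.Hf_eq, GJaux.coeff_Hf]
  have h0 : (Finsupp.single (0 : Fin 2) i + Finsupp.single (1 : Fin 2) (i + j)) 0 = i := by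
    simp [Finsupp.add_apply, Finsupp.single_apply]
  have h1 : (Finsupp.single (0 : Fin 2) i + Finsupp.single (1 : Fin 2) (i + j)) 1 = i + j := by
    simp [Finsupp.add_apply, Finsupp.single_apply]
  rw [h0, h1, if_pos (by omega)]
end
end

section
/- Fix n ≥ 1 and work in the formal power series ring over K = ℚ(q) in the n variables X₁,…,X_{n−1},U. For 1 ≤ i < j ≤ n set m_{ij} := X_i X_{i+1} ⋯ X_{j−1}, and for 1 ≤ i ≤ n set z_i := X_i X_{i+1} ⋯ X_{n−1} · U (so z_n = U). Then for every λ ∈ ℕ^n with λ₁ ≤ λ₂ ≤ ⋯ ≤ λ_n, the coefficient of the monomial ∏_{k=1}^{n−1} X_k^{λ₁+⋯+λ_k} · U^{λ₁+⋯+λ_n} in the series ∏_{1≤i<j≤n} (1 − m_{ij})·(1 − q⁻¹ m_{ij})⁻¹ · ∏_{i=1}^{n} (1 − z_i)⁻¹ equals ∏_{i=1}^{n} q^{−(n−i)λ_i}. -/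
noncomputable section

/-- The field `K = ℚ(q)` of rational functions over `ℚ`. -/
local notation "K" => RatFunc ℚ

/-- The variable `q` of `K = ℚ(q)`. -/
local notation "q" => (RatFunc.X : RatFunc ℚ)

namespace InverseSatakeGLn

variable (m : ℕ)

/-- The `n = m + 1` variables `X₁, …, X_{n−1}, U` of the power series ring: the variable of
index `k < m` is `X_{k+1}`, and the variable of index `m` is `U`. -/
def V (k : Fin (m + 1)) : MvPowerSeries (Fin (m + 1)) K := MvPowerSeries.X k

/-- `m i j = Xᵢ X_{i+1} ⋯ X_{j−1}` (zero-based: the product of the variables with indices in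
`[i, j)`, all of which are `X`-variables when `i < j`). -/
def mon (i j : Fin (m + 1)) : MvPowerSeries (Fin (m + 1)) K :=
  ∏ k ∈ Finset.Ico i j, V m k

/-- `z i = Xᵢ X_{i+1} ⋯ X_{n−1} · U` (zero-based: the product of the variables with indices
`≥ i`; in particular `z (last) = U`). -/
def z (i : Fin (m + 1)) : MvPowerSeries (Fin (m + 1)) K :=
  ∏ k ∈ Finset.Ici i, V m k

open MvPowerSeries Finset

def ind (s : Finset (Fin (m + 1))) : Fin (m + 1) →₀ ℕ :=
  Finsupp.equivFunOnFinite.symm fun k => if k ∈ s then 1 else 0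

@[simp] lemma ind_apply (s : Finset (Fin (m + 1))) (k : Fin (m + 1)) :
    ind m s k = if k ∈ s then 1 else 0 := rfl

lemma prod_X_eq (s : Finset (Fin (m + 1))) :
    (∏ k ∈ s, (MvPowerSeries.X k : MvPowerSeries (Fin (m + 1)) K))
      = MvPowerSeries.monomial (R := K) (ind m s) 1 := by
  induction s using Finset.cons_induction with
  | empty =>
      have h0 : ind m ∅ = 0 := by ext k; simp
      simp [h0]
  | cons k s hk ih =>
      have h1 : ind m (Finset.cons k s hk) = Finsupp.single k 1 + ind m s := by
        ext a
        by_cases ha : a = k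
        · subst ha; simp [hk, Finsupp.single_apply]
        · simp [Finsupp.single_apply, Ne.symm ha, ha]
      rw [Finset.prod_cons, ih, h1, MvPowerSeries.X, MvPowerSeries.monomial_mul_monomial,
        one_mul]

def geom (c : K) (s : Finset (Fin (m + 1))) (i0 : Fin (m + 1)) :
    MvPowerSeries (Fin (m + 1)) K :=
  fun e => if e = e i0 • ind m s then c ^ e i0 else 0

lemma coeff_geom (c : K) (s : Finset (Fin (m + 1))) (i0 : Fin (m + 1)) (e : Fin (m + 1) →₀ ℕ) :
    MvPowerSeries.coeff (R := K) e (geom m c s i0) = if e = e i0 • ind m s then c ^ e i0 else 0 := rfl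

lemma one_sub_mul_geom (c : K) (s : Finset (Fin (m + 1))) (i0 : Fin (m + 1)) (h : i0 ∈ s) :
    (1 - MvPowerSeries.C (σ := Fin (m+1)) (R := K) c * MvPowerSeries.monomial (R := K) (ind m s) 1)
      * geom m c s i0 = 1 := by
  set d := ind m s with hd
  have hdi0 : d i0 = 1 := by simp [hd, h]
  have hdk : ∀ k, d k = 0 ∨ d k = 1 := by
    intro k
    by_cases hks : k ∈ s <;> simp [hd, hks]
  ext e
  rw [sub_mul, one_mul, map_sub, mul_assoc, MvPowerSeries.coeff_C_mul,
    MvPowerSeries.coeff_monomial_mul, MvPowerSeries.coeff_one]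
  by_cases he : e = e i0 • d
  · have hek : ∀ k, e k = e i0 * d k := by
      intro k
      have := congrArg (fun f => f k) he
      simp only [Finsupp.smul_apply, smul_eq_mul] at this
      exact this
    rcases Nat.eq_zero_or_eq_succ_pred (e i0) with h0 | hsucc
    · have he0 : e = 0 := by rw [he, h0, zero_smul]
      have hnle : ¬ d ≤ e := by
        intro hle
        have := (Finsupp.le_def.mp hle) i0
        rw [he0] at this
        simp [hdi0] at this
      rw [if_pos he0, if_neg hnle, coeff_geom, if_pos he, h0]
      simp
    · set b := (e i0).pred with hb
      have hei0 : e i0 = b + 1 := hsucc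
      have hle : d ≤ e := by
        rw [Finsupp.le_def]
        intro k
        rw [hek k, hei0]
        exact Nat.le_mul_of_pos_left _ (by omega)
      have hsub : e - d = b • d := by
        ext k
        simp only [Finsupp.tsub_apply, Finsupp.smul_apply, smul_eq_mul, hek k, hei0]
        rcases hdk k with h1 | h1 <;> rw [h1] <;> omega
      have hsubi0 : (e - d) i0 = b := by rw [hsub]; simp [Finsupp.smul_apply, hdi0]
      have hne0 : ¬ e = 0 := by
        intro h0
        rw [h0] at hei0
        simp at hei0
      rw [if_neg hne0, if_pos hle, coeff_geom, coeff_geom, if_pos he,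
        if_pos (by rw [hsubi0, hsub]), hsubi0, hei0]
      ring
  · have hne0 : ¬ e = 0 := by
      intro h0
      apply he
      rw [h0]; simp
    rw [if_neg hne0, coeff_geom, if_neg he]
    by_cases hle : d ≤ e
    · rw [if_pos hle, coeff_geom, if_neg]
      · simp
      intro hcon
      apply he
      set b := (e - d) i0 with hb
      have h1 : e = b • d + d := by rw [← hcon]; exact (tsub_add_cancel_of_le hle).symm
      have h2 : e = (b+1) • d := by rw [h1, succ_nsmul]
      have h3 : e i0 = b + 1 := by
        rw [h2]; simp only [Finsupp.smul_apply, smul_eq_mul, hdi0, mul_one]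
      rw [h3, h2]
    · rw [if_neg hle]
      simp

lemma inv_eq_geom (c : K) (s : Finset (Fin (m + 1))) (i0 : Fin (m + 1)) (h : i0 ∈ s) :
    (1 - MvPowerSeries.C (σ := Fin (m+1)) (R := K) c * MvPowerSeries.monomial (R := K) (ind m s) 1)⁻¹
      = geom m c s i0 := by
  have hcc : MvPowerSeries.constantCoeff (σ := Fin (m+1)) (R := K)
      (1 - MvPowerSeries.C (σ := Fin (m+1)) (R := K) c * MvPowerSeries.monomial (R := K) (ind m s) 1) ≠ 0 := by
    have hne : ind m s ≠ 0 := by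
      intro h0
      have := congrArg (fun f => f i0) h0
      simp [h] at this
    rw [map_sub, map_one, map_mul, MvPowerSeries.constantCoeff_C]
    rw [show MvPowerSeries.constantCoeff (σ := Fin (m+1)) (R := K) (MvPowerSeries.monomial (R := K) (ind m s) 1)
        = 0 by
      rw [← MvPowerSeries.coeff_zero_eq_constantCoeff_apply, MvPowerSeries.coeff_monomial,
        if_neg (by exact fun hc => hne hc.symm)]]
    simp
  rw [MvPowerSeries.inv_eq_iff_mul_eq_one hcc, mul_comm]
  exact one_sub_mul_geom m c s i0 h

lemma coeff_mul_eq_zero (φ ψ : MvPowerSeries (Fin (m+1)) K) (e : Fin (m+1) →₀ ℕ)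
    (h : ∀ u ≤ e, MvPowerSeries.coeff (R := K) u φ = 0) :
    MvPowerSeries.coeff (R := K) e (φ * ψ) = 0 := by
  classical
  rw [MvPowerSeries.coeff_mul]
  apply Finset.sum_eq_zero
  intro p hp
  rw [Finset.HasAntidiagonal.mem_antidiagonal] at hp
  have hle : p.1 ≤ e := by
    rw [← hp]
    exact le_add_of_nonneg_right (by positivity)
  rw [h p.1 hle, zero_mul]

lemma coeff_partial_sum (c : K) (s : Finset (Fin (m + 1))) (i0 : Fin (m + 1)) (h : i0 ∈ s)
    (N : ℕ) (u : Fin (m+1) →₀ ℕ) (hu : u i0 ≤ N) :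
    MvPowerSeries.coeff (R := K) u
      (∑ a ∈ Finset.range (N + 1), MvPowerSeries.monomial (R := K) (a • ind m s) (c ^ a))
      = MvPowerSeries.coeff (R := K) u (geom m c s i0) := by
  classical
  set d := ind m s with hd
  have hdi0 : d i0 = 1 := by simp [hd, h]
  have hsmul : ∀ a : ℕ, (a • d) i0 = a := by
    intro a
    simp [Finsupp.smul_apply, hdi0]
  rw [map_sum, coeff_geom]
  by_cases hcase : u = u i0 • d
  · rw [if_pos hcase]
    rw [Finset.sum_eq_single_of_mem (u i0) (Finset.mem_range.mpr (by omega))]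
    · rw [MvPowerSeries.coeff_monomial, if_pos hcase]
    · intro a _ hne
      rw [MvPowerSeries.coeff_monomial, if_neg]
      intro hc
      apply hne
      rw [hc, hsmul]
  · rw [if_neg hcase]
    apply Finset.sum_eq_zero
    intro a _
    rw [MvPowerSeries.coeff_monomial, if_neg]
    intro hc
    apply hcase
    have : u i0 = a := by rw [hc, hsmul]
    rw [this, ← hc]

lemma coeff_geom_mul (c : K) (s : Finset (Fin (m + 1))) (i0 : Fin (m + 1)) (h : i0 ∈ s)
    (φ : MvPowerSeries (Fin (m+1)) K) (e : Fin (m+1) →₀ ℕ)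
    (hmin : ∀ k ∈ s, e i0 ≤ e k) :
    MvPowerSeries.coeff (R := K) e (geom m c s i0 * φ)
      = ∑ a ∈ Finset.range (e i0 + 1), c ^ a *
          MvPowerSeries.coeff (R := K) (e - a • ind m s) φ := by
  classical
  set d := ind m s with hd
  set P : MvPowerSeries (Fin (m+1)) K :=
    ∑ a ∈ Finset.range (e i0 + 1), MvPowerSeries.monomial (R := K) (a • d) (c ^ a) with hP
  have hsplit : geom m c s i0 = P + (geom m c s i0 - P) := by ring
  rw [hsplit, add_mul, map_add]
  have hzero : MvPowerSeries.coeff (R := K) e ((geom m c s i0 - P) * φ) = 0 := by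
    apply coeff_mul_eq_zero
    intro u hu
    have hui0 : u i0 ≤ e i0 := Finsupp.le_def.mp hu i0
    rw [map_sub, coeff_partial_sum m c s i0 h (e i0) u hui0, sub_self]
  rw [hzero, add_zero, hP, Finset.sum_mul, map_sum]
  apply Finset.sum_congr rfl
  intro a ha
  rw [MvPowerSeries.coeff_monomial_mul, if_pos]
  rw [Finsupp.le_def]
  intro k
  by_cases hks : k ∈ s
  · have : (a • d) k = a := by simp [Finsupp.smul_apply, hd, hks]
    rw [this]
    rw [Finset.mem_range] at ha
    exact le_trans (by omega) (hmin k hks)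
  · have : (a • d) k = 0 := by simp [Finsupp.smul_apply, hd, hks]
    rw [this]
    exact Nat.zero_le _

lemma mon_eq (i j : Fin (m + 1)) :
    mon m i j = MvPowerSeries.monomial (R := K) (ind m (Finset.Ico i j)) 1 := prod_X_eq m _

lemma z_eq (i : Fin (m + 1)) :
    z m i = MvPowerSeries.monomial (R := K) (ind m (Finset.Ici i)) 1 := prod_X_eq m _

def fac (i j : Fin (m + 1)) : MvPowerSeries (Fin (m + 1)) K :=
  (1 - mon m i j) * (1 - MvPowerSeries.C (σ := Fin (m + 1)) (R := K) q⁻¹ * mon m i j)⁻¹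

lemma fac_eq (i j : Fin (m + 1)) (hij : i < j) :
    fac m i j = (1 - mon m i j) * geom m q⁻¹ (Finset.Ico i j) i := by
  rw [fac, mon_eq, inv_eq_geom m _ _ i (Finset.mem_Ico.mpr ⟨le_refl i, hij⟩)]

lemma zfac_eq (i : Fin (m + 1)) :
    (1 - z m i)⁻¹ = geom m 1 (Finset.Ici i) i := by
  have hC : MvPowerSeries.C (σ := Fin (m + 1)) (R := K) (1 : K) = 1 :=
    map_one (MvPowerSeries.C (σ := Fin (m + 1)) (R := K))
  rw [z_eq, show (1 : MvPowerSeries (Fin (m+1)) K)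
        - MvPowerSeries.monomial (R := K) (ind m (Finset.Ici i)) 1
      = 1 - MvPowerSeries.C (σ := Fin (m + 1)) (R := K) 1
          * MvPowerSeries.monomial (R := K) (ind m (Finset.Ici i)) 1 by rw [hC, one_mul]]
  exact inv_eq_geom m _ _ i (Finset.mem_Ici.mpr (le_refl i))

/-- `φ` involves only variables of index `≥ i`. -/
def Supp (i : ℕ) (φ : MvPowerSeries (Fin (m+1)) K) : Prop :=
  ∀ e : Fin (m+1) →₀ ℕ, (∃ k : Fin (m+1), (k : ℕ) < i ∧ e k ≠ 0) →
    MvPowerSeries.coeff (R := K) e φ = 0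

lemma Supp_one (i : ℕ) : Supp m i 1 := by
  intro e ⟨k, _, hk⟩
  rw [MvPowerSeries.coeff_one, if_neg]
  intro h0
  rw [h0] at hk
  simp at hk

lemma Supp_sub {i : ℕ} {φ ψ : MvPowerSeries (Fin (m+1)) K} (hφ : Supp m i φ)
    (hψ : Supp m i ψ) : Supp m i (φ - ψ) := by
  intro e he
  rw [map_sub, hφ e he, hψ e he, sub_zero]

lemma Supp_mul {i : ℕ} {φ ψ : MvPowerSeries (Fin (m+1)) K} (hφ : Supp m i φ)
    (hψ : Supp m i ψ) : Supp m i (φ * ψ) := by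
  classical
  intro e ⟨k, hki, hk⟩
  rw [MvPowerSeries.coeff_mul]
  apply Finset.sum_eq_zero
  intro p hp
  rw [Finset.HasAntidiagonal.mem_antidiagonal] at hp
  have : p.1 k + p.2 k = e k := by rw [← hp]; simp
  by_cases h1 : p.1 k = 0
  · have h2 : p.2 k ≠ 0 := by omega
    rw [hψ p.2 ⟨k, hki, h2⟩, mul_zero]
  · rw [hφ p.1 ⟨k, hki, h1⟩, zero_mul]

lemma Supp_prod {i : ℕ} {α : Type*} (s : Finset α) (f : α → MvPowerSeries (Fin (m+1)) K)
    (h : ∀ a ∈ s, Supp m i (f a)) : Supp m i (∏ a ∈ s, f a) := by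
  induction s using Finset.cons_induction with
  | empty => simpa using Supp_one m i
  | cons a s ha ih =>
      rw [Finset.prod_cons]
      exact Supp_mul m (h a (Finset.mem_cons_self a s))
        (ih fun b hb => h b (Finset.mem_cons.mpr (Or.inr hb)))

lemma Supp_monomial (i : ℕ) (d : Fin (m+1) →₀ ℕ) (r : K)
    (hd : ∀ k : Fin (m+1), (k : ℕ) < i → d k = 0) :
    Supp m i (MvPowerSeries.monomial (R := K) d r) := by
  intro e ⟨k, hki, hk⟩
  rw [MvPowerSeries.coeff_monomial, if_neg]
  intro h0
  rw [h0] at hk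
  exact hk (hd k hki)

lemma Supp_geom (i : ℕ) (c : K) (s : Finset (Fin (m+1))) (i0 : Fin (m+1))
    (hs : ∀ k ∈ s, i ≤ (k : ℕ)) : Supp m i (geom m c s i0) := by
  intro e ⟨k, hki, hk⟩
  rw [coeff_geom, if_neg]
  intro h0
  apply hk
  have := congrArg (fun f => f k) h0
  simp only [Finsupp.smul_apply, smul_eq_mul, ind_apply] at this
  rw [this, if_neg, mul_zero]
  intro hks
  exact absurd (hs k hks) (by omega)

lemma Supp_fac (i : ℕ) (a b : Fin (m+1)) (ha : i ≤ (a : ℕ)) (hab : a < b) :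
    Supp m i (fac m a b) := by
  rw [fac_eq m a b hab]
  apply Supp_mul
  · rw [mon_eq]
    apply Supp_sub
    · exact Supp_one m i
    · apply Supp_monomial
      intro k hki
      rw [ind_apply, if_neg]
      intro hks
      rw [Finset.mem_Ico] at hks
      have := hks.1
      rw [Fin.le_def] at this
      omega
  · apply Supp_geom
    intro k hks
    rw [Finset.mem_Ico] at hks
    have := hks.1
    rw [Fin.le_def] at this
    omega

lemma Supp_zfac (i : ℕ) (a : Fin (m+1)) (ha : i ≤ (a : ℕ)) :
    Supp m i ((1 - z m a)⁻¹) := by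
  rw [zfac_eq]
  apply Supp_geom
  intro k hks
  rw [Finset.mem_Ici, Fin.le_def] at hks
  omega

def row (a : Fin (m+1)) : MvPowerSeries (Fin (m+1)) K :=
  (∏ j ∈ Finset.Ioi a, fac m a j) * (1 - z m a)⁻¹

def Ftail (i : ℕ) : MvPowerSeries (Fin (m+1)) K :=
  ∏ a ∈ Finset.univ.filter (fun a : Fin (m+1) => i ≤ (a : ℕ)), row m a

def T (i j : Fin (m+1)) : MvPowerSeries (Fin (m+1)) K :=
  (∏ b ∈ Finset.Ioi j, fac m i b) * ((1 - z m i)⁻¹ * Ftail m ((i : ℕ) + 1))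

def S (i : ℕ) (e : Fin (m+1) →₀ ℕ) : ℤ :=
  ∑ k ∈ Finset.univ.filter (fun k : Fin (m+1) => i ≤ (k : ℕ) ∧ (k : ℕ) < m), (e k : ℤ)

lemma Supp_row (i : ℕ) (a : Fin (m+1)) (ha : i ≤ (a : ℕ)) : Supp m i (row m a) := by
  apply Supp_mul
  · exact Supp_prod m _ _ fun b hb => Supp_fac m i a b ha (Finset.mem_Ioi.mp hb)
  · exact Supp_zfac m i a ha

lemma Supp_Ftail (i : ℕ) : Supp m i (Ftail m i) := by
  apply Supp_prod
  intro a ha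
  rw [Finset.mem_filter] at ha
  exact Supp_row m i a ha.2

lemma card_filt (i : ℕ) :
    (Finset.univ.filter (fun k : Fin (m+1) => i ≤ (k : ℕ) ∧ (k : ℕ) < m)).card = m - i := by
  rw [← Nat.card_Ico i m]
  refine Finset.card_bij (fun k _ => (k : ℕ)) ?_ ?_ ?_
  · intro a ha
    rw [Finset.mem_filter] at ha
    rw [Finset.mem_Ico]
    exact ha.2
  · intro a _ b _ hab
    exact Fin.val_injective hab
  · intro b hb
    rw [Finset.mem_Ico] at hb
    exact ⟨⟨b, by omega⟩, Finset.mem_filter.mpr ⟨Finset.mem_univ _, by simp; omega⟩, rfl⟩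

lemma S_succ (i : ℕ) (hi : i < m) (e : Fin (m+1) →₀ ℕ) :
    S m i e = (e ⟨i, by omega⟩ : ℤ) + S m (i+1) e := by
  rw [S, S, show Finset.univ.filter (fun k : Fin (m+1) => i ≤ (k : ℕ) ∧ (k : ℕ) < m)
      = insert (⟨i, by omega⟩ : Fin (m+1))
          (Finset.univ.filter (fun k : Fin (m+1) => i+1 ≤ (k : ℕ) ∧ (k : ℕ) < m)) by
    ext k
    simp only [Finset.mem_filter, Finset.mem_insert, Finset.mem_univ, true_and, Fin.ext_iff]
    omega]
  rw [Finset.sum_insert (by simp)]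

lemma S_empty (i : ℕ) (hi : m ≤ i) (e : Fin (m+1) →₀ ℕ) : S m i e = 0 := by
  rw [S, Finset.filter_false_of_mem, Finset.sum_empty]
  intro k _
  omega

lemma S_sub (i : ℕ) (e u : Fin (m+1) →₀ ℕ) (hu : u ≤ e) :
    S m i (e - u) = S m i e
      - ∑ k ∈ Finset.univ.filter (fun k : Fin (m+1) => i ≤ (k : ℕ) ∧ (k : ℕ) < m),
          (u k : ℤ) := by
  rw [S, S, ← Finset.sum_sub_distrib]
  apply Finset.sum_congr rfl
  intro k _
  have h := Finsupp.le_def.mp hu k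
  rw [Finsupp.tsub_apply]
  omega

lemma sum_smul_ind (t s : Finset (Fin (m+1))) (a : ℕ) :
    ∑ k ∈ t, (((a • ind m s) k : ℕ) : ℤ) = (a : ℤ) * (t ∩ s).card := by
  have h : ∀ k ∈ t, (((a • ind m s) k : ℕ) : ℤ) = if k ∈ s then (a : ℤ) else 0 := by
    intro k _
    rw [Finsupp.smul_apply, ind_apply]
    by_cases hks : k ∈ s <;> simp [hks]
  rw [Finset.sum_congr rfl h, Finset.sum_ite_mem, Finset.sum_const]
  simp [mul_comm]

lemma smul_ind_le (e : Fin (m+1) →₀ ℕ) (s : Finset (Fin (m+1))) (i0 : Fin (m+1))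
    (hmin : ∀ k ∈ s, e i0 ≤ e k) (a : ℕ) (ha : a ≤ e i0) : a • ind m s ≤ e := by
  rw [Finsupp.le_def]
  intro k
  rw [Finsupp.smul_apply, ind_apply]
  by_cases hks : k ∈ s
  · simp only [hks, if_true, smul_eq_mul, mul_one]
    exact le_trans ha (hmin k hks)
  · simp [hks]

lemma sub_smul_ind_apply (e : Fin (m+1) →₀ ℕ) (s : Finset (Fin (m+1))) (a : ℕ)
    (k : Fin (m+1)) :
    (e - a • ind m s) k = e k - (if k ∈ s then a else 0) := by
  rw [Finsupp.tsub_apply, Finsupp.smul_apply, ind_apply]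
  by_cases hks : k ∈ s <;> simp [hks]

lemma mono_sub (e : Fin (m+1) →₀ ℕ) (hmono : Monotone ⇑e) (i : ℕ)
    (hzero : ∀ k : Fin (m+1), (k : ℕ) < i → e k = 0)
    (s : Finset (Fin (m+1))) (hs : ∀ k l : Fin (m+1), k ≤ l → l ∈ s → k ∉ s → (k : ℕ) < i)
    (a : ℕ) : Monotone ⇑(e - a • ind m s) := by
  intro k l hkl
  rw [sub_smul_ind_apply, sub_smul_ind_apply]
  by_cases hls : l ∈ s <;> by_cases hks : k ∈ s
  · simp only [hls, hks, if_true]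
    exact Nat.sub_le_sub_right (hmono hkl) a
  · rw [hzero k (hs k l hkl hls hks)]
    simp
  · simp only [hls, hks, if_true, if_false]
    exact le_trans (Nat.sub_le _ _) (hmono hkl)
  · simp only [hls, hks, if_false]
    exact Nat.sub_le_sub_right (hmono hkl) 0

lemma zero_sub_smul (e : Fin (m+1) →₀ ℕ) (i : ℕ)
    (hzero : ∀ k : Fin (m+1), (k : ℕ) < i → e k = 0) (u : Fin (m+1) →₀ ℕ)
    (k : Fin (m+1)) (hk : (k : ℕ) < i) : (e - u) k = 0 := by
  rw [Finsupp.tsub_apply, hzero k hk]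
  simp

lemma Ftail_empty (i : ℕ) (hi : m < i) : Ftail m i = 1 := by
  rw [Ftail, Finset.filter_false_of_mem, Finset.prod_empty]
  intro k _
  have := k.isLt
  omega

lemma Ftail_succ (i : ℕ) (hi : i ≤ m) :
    Ftail m i = row m ⟨i, by omega⟩ * Ftail m (i+1) := by
  rw [Ftail, Ftail, show Finset.univ.filter (fun a : Fin (m+1) => i ≤ (a : ℕ))
      = insert (⟨i, by omega⟩ : Fin (m+1))
          (Finset.univ.filter (fun a : Fin (m+1) => i + 1 ≤ (a : ℕ))) by
    ext k
    simp only [Finset.mem_filter, Finset.mem_insert, Finset.mem_univ, true_and, Fin.ext_iff]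
    omega]
  rw [Finset.prod_insert (by simp)]

lemma T_self (i : ℕ) (hi : i ≤ m) :
    Ftail m i = T m ⟨i, by omega⟩ ⟨i, by omega⟩ := by
  rw [Ftail_succ m i hi, row, T, mul_assoc]

lemma T_last (i j : Fin (m+1)) (hj : (j : ℕ) = m) :
    T m i j = (1 - z m i)⁻¹ * Ftail m ((i : ℕ) + 1) := by
  rw [T, show Finset.Ioi j = ∅ from Finset.eq_empty_of_forall_notMem (by
    intro b hb
    rw [Finset.mem_Ioi, Fin.lt_def] at hb
    have := b.isLt
    omega), Finset.prod_empty, one_mul]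

lemma T_step (i j : Fin (m+1)) (hj : (j : ℕ) < m) :
    T m i j = fac m i ⟨(j : ℕ)+1, by omega⟩ * T m i ⟨(j : ℕ)+1, by omega⟩ := by
  rw [T, T, show Finset.Ioi j
      = insert (⟨(j : ℕ)+1, by omega⟩ : Fin (m+1)) (Finset.Ioi ⟨(j : ℕ)+1, by omega⟩) by
    ext b
    simp only [Finset.mem_Ioi, Finset.mem_insert, Fin.lt_def, Fin.ext_iff]
    omega]
  rw [Finset.prod_insert (by
    rw [Finset.mem_Ioi]
    exact lt_irrefl _), mul_assoc]

lemma inner (i j : Fin (m+1)) (hij : i ≤ j)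
    (IH : ∀ e : Fin (m+1) →₀ ℕ, Monotone ⇑e →
        (∀ k : Fin (m+1), (k : ℕ) < (i : ℕ) + 1 → e k = 0) →
        MvPowerSeries.coeff (R := K) e (Ftail m ((i : ℕ) + 1)) = q ^ (- S m ((i : ℕ) + 1) e)) :
    ∀ e : Fin (m+1) →₀ ℕ, Monotone ⇑e →
      (∀ k : Fin (m+1), (k : ℕ) < (i : ℕ) → e k = 0) →
      MvPowerSeries.coeff (R := K) e (T m i j)
        = q ^ ((((j : ℕ) : ℤ) - ((i : ℕ) : ℤ)) * (e i : ℤ) - S m (i : ℕ) e) := by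
  by_cases hj : (j : ℕ) = m
  · -- base case j = last
    intro e hmono hzero
    have hmin : ∀ k ∈ Finset.Ici i, e i ≤ e k := fun k hk => hmono (Finset.mem_Ici.mp hk)
    rw [T_last m i j hj, zfac_eq,
      coeff_geom_mul m 1 (Finset.Ici i) i (Finset.mem_Ici.mpr le_rfl) _ e hmin,
      Finset.sum_range_succ]
    have hvanish : ∀ a ∈ Finset.range (e i),
        (1:K) ^ a * MvPowerSeries.coeff (R := K) (e - a • ind m (Finset.Ici i))
          (Ftail m ((i : ℕ) + 1)) = 0 := by
      intro a ha
      rw [Finset.mem_range] at ha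
      rw [Supp_Ftail m ((i : ℕ) + 1) _ ⟨i, by omega, by
        rw [sub_smul_ind_apply, if_pos (Finset.mem_Ici.mpr le_rfl)]
        omega⟩, mul_zero]
    rw [Finset.sum_eq_zero hvanish, zero_add, one_pow, one_mul]
    set u := e i • ind m (Finset.Ici i) with hu
    have hule : u ≤ e := smul_ind_le m e _ i hmin (e i) le_rfl
    have hmono' : Monotone ⇑(e - u) := by
      apply mono_sub m e hmono (i : ℕ) hzero
      intro k l _ _ hks
      rw [Finset.mem_Ici, Fin.le_def] at hks
      omega
    have hzero' : ∀ k : Fin (m+1), (k : ℕ) < (i : ℕ) + 1 → (e - u) k = 0 := by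
      intro k hk
      by_cases hki : (k : ℕ) < (i : ℕ)
      · exact zero_sub_smul m e (i : ℕ) hzero _ k hki
      · have hkeq : k = i := Fin.ext (by omega)
        rw [hkeq, hu, sub_smul_ind_apply, if_pos (Finset.mem_Ici.mpr le_rfl)]
        omega
    rw [IH _ hmono' hzero']
    congr 1
    have hsum : ∑ k ∈ Finset.univ.filter
          (fun k : Fin (m+1) => (i : ℕ) + 1 ≤ (k : ℕ) ∧ (k : ℕ) < m), ((u k : ℕ) : ℤ)
        = (e i : ℤ) * ((m - ((i : ℕ) + 1) : ℕ) : ℤ) := by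
      rw [hu, sum_smul_ind, Finset.inter_eq_left.mpr, card_filt]
      intro k hk
      rw [Finset.mem_filter] at hk
      rw [Finset.mem_Ici, Fin.le_def]
      omega
    rw [S_sub m _ e u hule, hsum]
    by_cases him : (i : ℕ) < m
    · rw [S_succ m (i : ℕ) him e]
      have hcast : ((m - ((i : ℕ) + 1) : ℕ) : ℤ) = (m : ℤ) - (i : ℕ) - 1 := by
        rw [Nat.cast_sub (by omega)]
        push_cast
        ring
      rw [hcast, hj]
      have : (⟨(i : ℕ), by omega⟩ : Fin (m+1)) = i := Fin.ext rfl
      rw [this]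
      ring
    · have him' : (i : ℕ) = m := by have := i.isLt; omega
      rw [S_empty m ((i : ℕ) + 1) (by omega) e, S_empty m (i : ℕ) (by omega) e]
      have : ((m - ((i : ℕ) + 1) : ℕ) : ℤ) = 0 := by
        rw [show m - ((i : ℕ) + 1) = 0 by omega]
        rfl
      rw [this, hj, him']
      ring
  · -- step case
    have hjm : (j : ℕ) < m := by have := j.isLt; omega
    have hijn : (i : ℕ) ≤ (j : ℕ) := Fin.le_def.mp hij
    set j' : Fin (m+1) := ⟨(j : ℕ)+1, by omega⟩ with hj'
    have hj'v : ((j' : Fin (m+1)) : ℕ) = (j : ℕ) + 1 := rfl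
    have hij' : i ≤ j' := by rw [Fin.le_def, hj'v]; omega
    have hiltj' : i < j' := by rw [Fin.lt_def, hj'v]; omega
    have IHj' := inner i j' hij' IH
    intro e hmono hzero
    set s : Finset (Fin (m+1)) := Finset.Ico i j' with hs
    set d : Fin (m+1) →₀ ℕ := ind m s with hd
    have hies : i ∈ s := Finset.mem_Ico.mpr ⟨le_rfl, hiltj'⟩
    have hsprop : ∀ k l : Fin (m+1), k ≤ l → l ∈ s → k ∉ s → (k : ℕ) < (i : ℕ) := by
      intro k l hkl hl hk
      obtain ⟨hl1, hl2⟩ := Finset.mem_Ico.mp hl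
      rw [Fin.le_def] at hkl
      rw [Fin.lt_def, hj'v] at hl2
      by_contra hki
      apply hk
      rw [hs, Finset.mem_Ico]
      exact ⟨by rw [Fin.le_def]; omega, by rw [Fin.lt_def, hj'v]; omega⟩
    have hScard : ∀ (u : Fin (m+1) →₀ ℕ) (a : ℕ), a • d ≤ u →
        S m (i : ℕ) (u - a • d)
          = S m (i : ℕ) u - a * (((j : ℕ) : ℤ) + 1 - ((i : ℕ) : ℤ)) := by
      intro u a hle
      rw [S_sub m _ u _ hle, hd, sum_smul_ind, Finset.inter_eq_right.mpr, hs, Fin.card_Ico,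
        hj'v]
      · rw [Nat.cast_sub (by omega)]
        push_cast
        ring
      · intro k hk
        obtain ⟨hk1, hk2⟩ := Finset.mem_Ico.mp hk
        rw [Finset.mem_filter]
        refine ⟨Finset.mem_univ _, Fin.le_def.mp hk1, ?_⟩
        rw [Fin.lt_def, hj'v] at hk2
        omega
    have hqinv : ∀ a : ℕ, (q⁻¹ : RatFunc ℚ) ^ a = q ^ (-(a : ℤ)) := by
      intro a
      rw [zpow_neg, zpow_natCast, inv_pow]
    have Hval : ∀ u : Fin (m+1) →₀ ℕ, Monotone ⇑u →
        (∀ k : Fin (m+1), (k : ℕ) < (i : ℕ) → u k = 0) →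
        MvPowerSeries.coeff (R := K) u (geom m q⁻¹ s i * T m i j')
          = ∑ a ∈ Finset.range (u i + 1),
              q ^ ((((j : ℕ) : ℤ) + 1 - ((i : ℕ) : ℤ)) * (u i : ℤ) - S m (i : ℕ) u - a) := by
      intro u hum huz
      have humin : ∀ k ∈ s, u i ≤ u k := fun k hk => hum (Finset.mem_Ico.mp hk).1
      rw [coeff_geom_mul m q⁻¹ s i hies _ u humin]
      apply Finset.sum_congr rfl
      intro a ha
      have hale : a ≤ u i := by rw [Finset.mem_range] at ha; omega
      have hdle : a • d ≤ u := smul_ind_le m u s i humin a hale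
      have hm' : Monotone ⇑(u - a • d) := mono_sub m u hum (i : ℕ) huz s hsprop a
      have hz' : ∀ k : Fin (m+1), (k : ℕ) < (i : ℕ) → (u - a • d) k = 0 :=
        fun k hk => zero_sub_smul m u (i : ℕ) huz _ k hk
      rw [IHj' _ hm' hz']
      have h1 : (((u - a • d) i : ℕ) : ℤ) = (u i : ℤ) - a := by
        rw [hd, sub_smul_ind_apply, if_pos hies, Nat.cast_sub hale]
      rw [hScard u a hdle, hqinv a, ← zpow_add₀ RatFunc.X_ne_zero]
      congr 1
      rw [h1, hj'v]
      push_cast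
      ring
    rw [T_step m i j hjm, ← hj', fac_eq m i j' hiltj', ← hs, mul_assoc,
      sub_mul, one_mul, map_sub, mon_eq m i j', ← hs, ← hd,
      MvPowerSeries.coeff_monomial_mul, Hval e hmono hzero]
    by_cases hei : e i = 0
    · have hnle : ¬ d ≤ e := by
        intro hle
        have := Finsupp.le_def.mp hle i
        rw [hd, ind_apply, if_pos hies, hei] at this
        omega
      rw [if_neg hnle, sub_zero, hei]
      rw [Finset.sum_range_one]
      congr 1
      push_cast
      ring
    · have hpos : 0 < e i := Nat.pos_of_ne_zero hei
      have hemin : ∀ k ∈ s, e i ≤ e k := fun k hk => hmono (Finset.mem_Ico.mp hk).1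
      have hdlee : d ≤ e := by
        have := smul_ind_le m e s i hemin 1 hpos
        rwa [one_smul] at this
      have hm1 : Monotone ⇑(e - d) := by
        have := mono_sub m e hmono (i : ℕ) hzero s hsprop 1
        rwa [one_smul] at this
      have hz1 : ∀ k : Fin (m+1), (k : ℕ) < (i : ℕ) → (e - d) k = 0 :=
        fun k hk => zero_sub_smul m e (i : ℕ) hzero d k hk
      rw [if_pos hdlee, one_mul, Hval (e - d) hm1 hz1]
      have h1n : (e - d) i = e i - 1 := by
        have : e - d = e - 1 • d := by rw [one_smul]
        rw [this, hd, sub_smul_ind_apply, if_pos hies]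
      have h1 : (((e - d) i : ℕ) : ℤ) = (e i : ℤ) - 1 := by
        rw [h1n, Nat.cast_sub hpos]
        push_cast
        ring
      have h2 : S m (i : ℕ) (e - d)
          = S m (i : ℕ) e - (((j : ℕ) : ℤ) + 1 - ((i : ℕ) : ℤ)) := by
        have := hScard e 1 (by rwa [one_smul])
        rw [one_smul] at this
        rw [this]
        push_cast
        ring
      have hrange : (e - d) i + 1 = e i := by omega
      have hsum2 : ∑ a ∈ Finset.range ((e - d) i + 1),
            q ^ ((((j : ℕ) : ℤ) + 1 - ((i : ℕ) : ℤ)) * ((e - d) i : ℤ)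
              - S m (i : ℕ) (e - d) - a)
          = ∑ a ∈ Finset.range (e i),
              q ^ ((((j : ℕ) : ℤ) + 1 - ((i : ℕ) : ℤ)) * (e i : ℤ) - S m (i : ℕ) e - a) := by
        rw [hrange]
        apply Finset.sum_congr rfl
        intro a _
        congr 1
        rw [h1, h2]
        ring
      rw [hsum2, Finset.sum_range_succ, add_sub_cancel_left]
      congr 1
      ring


lemma outer (i : ℕ) :
    ∀ e : Fin (m+1) →₀ ℕ, Monotone ⇑e →
      (∀ k : Fin (m+1), (k : ℕ) < i → e k = 0) →
      MvPowerSeries.coeff (R := K) e (Ftail m i) = q ^ (- S m i e) := by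
  by_cases hi : i ≤ m
  · intro e hmono hzero
    have hIH := outer (i+1)
    have hlt : i < m + 1 := by omega
    have h := inner m ⟨i, hlt⟩ ⟨i, hlt⟩ le_rfl (fun e' h1 h2 => hIH e' h1 h2) e hmono hzero
    rw [T_self m i hi, h]
    congr 1
    ring
  · intro e hmono hzero
    have he : e = 0 := by
      ext k
      exact hzero k (by have := k.isLt; omega)
    rw [Ftail_empty m i (by omega), he, show S m i 0 = 0 by simp [S]]
    rw [MvPowerSeries.coeff_one, if_pos rfl]
    simp
termination_by (m+1) - i

/-- For `GL_n`, `n = m + 1 ≥ 1`: the coefficient of the monomial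
`∏_k X_k^{λ₁+⋯+λ_k} · U^{λ₁+⋯+λ_n}` in the series
`∏_{i<j} (1 − m_{ij})(1 − q⁻¹ m_{ij})⁻¹ · ∏_i (1 − z_i)⁻¹`
equals `∏_i q^{−(n−i)λᵢ}`, for every antidominant `λ` (i.e. `λ` monotone).  This is the
combinatorial content of the statement that the inverse Satake transform of the standard
`L`-factor generating function for `GL_n` is `|det|^{(n−1)/2} · 1_{Mat_n(ℤ_p)}`. -/
theorem inverse_satake_std_GLn (lam : Fin (m + 1) → ℕ) (hlam : Monotone lam) :
    MvPowerSeries.coeff (R := K)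
      (Finsupp.equivFunOnFinite.symm fun k : Fin (m + 1) => ∑ i ∈ Finset.Iic k, lam i)
      ((∏ i : Fin (m + 1), ∏ j ∈ Finset.Ioi i,
          (1 - mon m i j) * (1 - MvPowerSeries.C (σ := Fin (m + 1)) (R := K) q⁻¹ * mon m i j)⁻¹)
        * ∏ i : Fin (m + 1), (1 - z m i)⁻¹)
      = ∏ i : Fin (m + 1), q⁻¹ ^ ((m - (i : ℕ)) * lam i) := by
  set e : Fin (m+1) →₀ ℕ :=
    Finsupp.equivFunOnFinite.symm fun k : Fin (m + 1) => ∑ i ∈ Finset.Iic k, lam i with he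
  have heval : ∀ k, e k = ∑ i ∈ Finset.Iic k, lam i := fun k => rfl
  have hseries : (∏ i : Fin (m + 1), ∏ j ∈ Finset.Ioi i,
          (1 - mon m i j) * (1 - MvPowerSeries.C (σ := Fin (m + 1)) (R := K) q⁻¹ * mon m i j)⁻¹)
        * ∏ i : Fin (m + 1), (1 - z m i)⁻¹ = Ftail m 0 := by
    rw [Ftail, show Finset.univ.filter (fun a : Fin (m+1) => 0 ≤ (a : ℕ)) = Finset.univ by
      apply Finset.filter_true_of_mem
      intro k _
      omega]
    rw [← Finset.prod_mul_distrib]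
    rfl
  have hmono : Monotone ⇑e := by
    intro a b hab
    rw [heval, heval]
    apply Finset.sum_le_sum_of_subset
    exact Finset.Iic_subset_Iic.mpr hab
  have hzero : ∀ k : Fin (m+1), (k : ℕ) < 0 → e k = 0 := fun k hk => absurd hk (by omega)
  rw [hseries, outer m 0 e hmono hzero]
  have hN : S m 0 e
      = ((∑ k ∈ Finset.univ.filter (fun k : Fin (m+1) => (k : ℕ) < m), e k : ℕ) : ℤ) := by
    rw [S, Nat.cast_sum]
    apply Finset.sum_congr
    · apply Finset.filter_congr
      intro k _
      simp
    · intro k _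
      rfl
  have hswap : ∑ k ∈ Finset.univ.filter (fun k : Fin (m+1) => (k : ℕ) < m), e k
      = ∑ i : Fin (m + 1), (m - (i : ℕ)) * lam i := by
    have h1 : ∀ k : Fin (m+1), e k = ∑ i : Fin (m+1), if i ≤ k then lam i else 0 := by
      intro k
      rw [heval, ← Finset.sum_filter]
      apply Finset.sum_congr
      · ext a
        simp
      · intros; rfl
    calc ∑ k ∈ Finset.univ.filter (fun k : Fin (m+1) => (k : ℕ) < m), e k
        = ∑ k ∈ Finset.univ.filter (fun k : Fin (m+1) => (k : ℕ) < m),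
            ∑ i : Fin (m+1), if i ≤ k then lam i else 0 := by
          apply Finset.sum_congr rfl
          intro k _
          exact h1 k
      _ = ∑ i : Fin (m+1), ∑ k ∈ Finset.univ.filter (fun k : Fin (m+1) => (k : ℕ) < m),
            if i ≤ k then lam i else 0 := Finset.sum_comm
      _ = ∑ i : Fin (m + 1), (m - (i : ℕ)) * lam i := by
          apply Finset.sum_congr rfl
          intro i _
          rw [← Finset.sum_filter]
          rw [show (Finset.univ.filter (fun k : Fin (m+1) => (k : ℕ) < m)).filter
                (fun k => i ≤ k)
              = Finset.univ.filter (fun k : Fin (m+1) => (i : ℕ) ≤ (k : ℕ) ∧ (k : ℕ) < m) by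
            ext k
            simp only [Finset.mem_filter, Finset.mem_univ, true_and, Fin.le_def]
            tauto]
          rw [Finset.sum_const, card_filt]
          simp [mul_comm]
  rw [hN, hswap]
  rw [Finset.prod_pow_eq_pow_sum]
  rw [zpow_neg, zpow_natCast, inv_pow]

end InverseSatakeGLn
end
end

section
/- Let K = ℚ(q), let L_n be the Laurent polynomial ring over K in n variables with fraction field F_n, and let S_n act by permuting the variables. Then ∑_{σ∈S_n} σ( ∏_{1≤i<j≤n} (1 − q⁻¹ z_i z_j⁻¹)·(1 − z_i z_j⁻¹)⁻¹ ) is a constant, equal (as an element of K embedded in F_n) to ∏_{k=1}^{n} (1 − q^{−k})·(1 − q^{−1})⁻¹. -/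
noncomputable section

set_option synthInstance.maxHeartbeats 1000000
set_option maxHeartbeats 1000000

namespace InverseSatake

/-- The field `K = ℚ(q)` of rational functions over `ℚ`. -/
abbrev K : Type := RatFunc ℚ

/-- The variable `q` of `K = ℚ(q)`. -/
abbrev q : K := RatFunc.X

/-- `L_n`: the Laurent polynomial ring over `K` in `n` variables, i.e. the group algebra
of `ℤ^n` over `K`. -/
abbrev Lau (n : ℕ) : Type := AddMonoidAlgebra K (Fin n → ℤ)

instance (n : ℕ) : IsDomain (Lau n) := NoZeroDivisors.to_isDomain _

/-- `F_n`: the field of fractions of `L_n`. -/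
abbrev FF (n : ℕ) : Type _ := FractionRing (Lau n)

instance (n : ℕ) : Field (FF n) := inferInstance

variable {n : ℕ}

/-- The action of `σ ∈ S_n` on exponent vectors: `(σ·λ)ᵢ = λ_{σ⁻¹(i)}`. -/
def permAddEquiv (σ : Equiv.Perm (Fin n)) : (Fin n → ℤ) ≃+ (Fin n → ℤ) where
  toFun v := v ∘ σ.symm
  invFun v := v ∘ σ
  left_inv v := by ext i; simp
  right_inv v := by ext i; simp
  map_add' v w := rfl

/-- The action of `S_n` on `L_n` by permuting the variables. -/
def actL (σ : Equiv.Perm (Fin n)) : Lau n ≃ₐ[K] Lau n :=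
  AddMonoidAlgebra.domCongr K K (permAddEquiv σ)

/-- The action of `S_n` on `F_n` by permuting the variables. -/
def actF (σ : Equiv.Perm (Fin n)) : FF n ≃+* FF n :=
  IsFractionRing.ringEquivOfRingEquiv (actL σ).toRingEquiv

/-- The exponent vector of the Laurent monomial `zᵢ z_j⁻¹`. -/
def eu (i j : Fin n) : Fin n → ℤ := Pi.single i 1 - Pi.single j 1

/-- The canonical embedding `L_n → F_n`. -/
def alg : Lau n →+* FF n := algebraMap (Lau n) (FF n)

section GenField
open Finset Polynomial
variable {E : Type*} [Field E]


lemma key_S {m : ℕ} (t : E) (ht : t ≠ 1) (x : Fin m → E)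
    (hinj : Function.Injective x) (h0 : ∀ i, x i ≠ 0) :
    ∑ v : Fin m, ∏ w ∈ Finset.univ.erase v, ((x v - t * x w) / (x v - x w))
      = ∑ j ∈ Finset.range m, t ^ j := by
  classical
  set p : E[X] := ∏ w : Fin m, (X - C (t * x w)) with hp
  set r : E[X] := ∏ w : Fin m, (X - C (x w)) with hr
  have hpm : p.Monic := monic_prod_of_monic _ _ fun _ _ => monic_X_sub_C _
  have hrm : r.Monic := monic_prod_of_monic _ _ fun _ _ => monic_X_sub_C _
  have hpd : p.natDegree = m := by
    rw [hp, natDegree_prod_of_monic _ _ fun _ _ => monic_X_sub_C _]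
    simp only [natDegree_X_sub_C, Finset.sum_const, card_univ, Fintype.card_fin, smul_eq_mul, mul_one]
  have hrd : r.natDegree = m := by
    rw [hr, natDegree_prod_of_monic _ _ fun _ _ => monic_X_sub_C _]
    simp only [natDegree_X_sub_C, Finset.sum_const, card_univ, Fintype.card_fin, smul_eq_mul, mul_one]
  have hdeg : (p - r).degree < (#(univ : Finset (Fin m)) : ℕ) := by
    rcases eq_or_ne p r with h | h
    · simp only [h, sub_self, degree_zero]
      exact WithBot.bot_lt_coe _
    · calc (p - r).degree < p.degree := degree_sub_lt
            (by rw [degree_eq_natDegree hpm.ne_zero, degree_eq_natDegree hrm.ne_zero, hpd, hrd]) hpm.ne_zero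
            (by rw [hpm.leadingCoeff, hrm.leadingCoeff])
          _ = m := by rw [degree_eq_natDegree hpm.ne_zero, hpd]
          _ = (#(univ : Finset (Fin m)) : ℕ) := by simp
  have hint := Lagrange.eq_interpolate (f := p - r) (v := x) hinj.injOn hdeg
  have heq := congrArg (Polynomial.eval 0) hint
  rw [Lagrange.interpolate_apply, eval_finset_sum] at heq
  set B : E := ∏ w : Fin m, (-(x w)) with hBdef
  have hB : B ≠ 0 := Finset.prod_ne_zero_iff.mpr fun w _ => neg_ne_zero.mpr (h0 w)
  have hA : p.eval 0 = t ^ m * B := by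
    rw [hp, eval_prod]
    simp only [eval_sub, eval_X, eval_C, zero_sub]
    rw [hBdef, show (t:E) ^ m = ∏ _w : Fin m, t by simp, ← Finset.prod_mul_distrib]
    exact Finset.prod_congr rfl fun w _ => by ring
  have hBv : r.eval 0 = B := by
    rw [hr, eval_prod]
    simp only [eval_sub, eval_X, eval_C, zero_sub]
    exact hBdef.symm
  have hsummand : ∀ i : Fin m,
      eval 0 (C ((p - r).eval (x i)) * Lagrange.basis univ x i)
        = (t - 1) * B * ∏ w ∈ univ.erase i, ((x i - t * x w) / (x i - x w)) := by
    intro i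
    have h1 : r.eval (x i) = 0 := by
      rw [hr, eval_prod]
      exact Finset.prod_eq_zero (Finset.mem_univ i) (by simp)
    have h2 : p.eval (x i) = (1 - t) * x i * ∏ w ∈ univ.erase i, (x i - t * x w) := by
      rw [hp, eval_prod]
      simp only [eval_sub, eval_X, eval_C]
      rw [← Finset.mul_prod_erase univ _ (Finset.mem_univ i)]
      ring
    have h3 : eval 0 (Lagrange.basis univ x i)
        = ∏ w ∈ univ.erase i, ((x i - x w)⁻¹ * (-(x w))) := by
      rw [Lagrange.basis, eval_prod]
      refine Finset.prod_congr rfl fun w _ => ?_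
      rw [Lagrange.basisDivisor]
      simp
    have h4 : B = (-(x i)) * ∏ w ∈ univ.erase i, (-(x w)) :=
      (Finset.mul_prod_erase univ _ (Finset.mem_univ i)).symm
    rw [eval_mul, eval_C, eval_sub, h1, sub_zero, h2, h3, h4]
    simp only [div_eq_mul_inv, Finset.prod_mul_distrib]
    ring
  rw [Finset.sum_congr rfl fun i _ => hsummand i, ← Finset.mul_sum, eval_sub, hA, hBv] at heq
  have hstep : ((t ^ m - 1)) * B
      = ((t - 1) * ∑ v : Fin m, ∏ w ∈ univ.erase v, ((x v - t * x w) / (x v - x w))) * B := by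
    linear_combination heq
  have hcan := mul_right_cancel₀ hB hstep
  have ht1 : t - 1 ≠ 0 := sub_ne_zero.mpr ht
  rw [geom_sum_eq ht, hcan, mul_div_cancel_left₀ _ ht1]

lemma key_T {m : ℕ} (t : E) (ht : t ≠ 1) (x : Fin m → E)
    (hinj : Function.Injective x) (h0 : ∀ i, x i ≠ 0) :
    ∑ v : Fin m, ∏ w ∈ Finset.univ.erase v, ((x w - t * x v) / (x w - x v))
      = ∑ j ∈ Finset.range m, t ^ j := by
  have h := key_S t ht (fun i => (x i)⁻¹)
    (fun a b hab => hinj (inv_injective hab)) (fun i => inv_ne_zero (h0 i))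
  rw [← h]
  refine Finset.sum_congr rfl fun v _ => Finset.prod_congr rfl fun w hw => ?_
  have hwv : x w ≠ x v := fun hh => (Finset.mem_erase.mp hw).1 (hinj hh)
  have h1 : x w - x v ≠ 0 := sub_ne_zero.mpr hwv
  have h2 : (x v)⁻¹ - (x w)⁻¹ ≠ 0 :=
    sub_ne_zero.mpr fun hh => hwv (inv_injective hh.symm)
  rw [div_eq_div_iff h1 h2]
  field_simp [h0 v, h0 w]

lemma prod_comp_swap_succ {m : ℕ} (v : Fin (m + 1)) (g : Fin (m + 1) → E) :
    ∏ u : Fin m, g (Equiv.swap 0 v u.succ) = ∏ w ∈ Finset.univ.erase v, g w := by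
  refine Finset.prod_bij (fun u _ => Equiv.swap 0 v u.succ) ?_ ?_ ?_ ?_
  · intro u _
    simp only [Finset.mem_erase, Finset.mem_univ, and_true]
    intro h
    have : u.succ = (0 : Fin (m + 1)) := by
      have := congrArg (Equiv.swap 0 v) h
      rwa [Equiv.swap_apply_self, Equiv.swap_apply_right] at this
    exact Fin.succ_ne_zero u this
  · intro a _ b _ h
    exact Fin.succ_injective _ ((Equiv.swap 0 v).injective h)
  · intro w hw
    obtain ⟨hwv, -⟩ := Finset.mem_erase.mp hw
    have h1 : Equiv.swap 0 v w ≠ 0 := by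
      intro h
      apply hwv
      have := congrArg (Equiv.swap 0 v) h
      rwa [Equiv.swap_apply_self, Equiv.swap_apply_left] at this
    exact ⟨(Equiv.swap 0 v w).pred h1, Finset.mem_univ _, by
      simp [Fin.succ_pred, Equiv.swap_apply_self]⟩
  · intro u _; rfl

lemma main_sum (t : E) (ht : t ≠ 1) :
    ∀ (m : ℕ) (x : Fin m → E), Function.Injective x → (∀ i, x i ≠ 0) →
    ∑ σ : Equiv.Perm (Fin m), ∏ i : Fin m, ∏ j ∈ Finset.Ioi i,
        ((x (σ j) - t * x (σ i)) / (x (σ j) - x (σ i)))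
      = ∏ k ∈ Finset.range m, ∑ j ∈ Finset.range (k + 1), t ^ j := by
  intro m
  induction m with
  | zero =>
    intro x _ _
    simp
  | succ m ih =>
    intro x hinj h0
    rw [← Equiv.sum_comp (Equiv.Perm.decomposeFin.symm :
      Fin (m + 1) × Equiv.Perm (Fin m) ≃ Equiv.Perm (Fin (m + 1)))]
    have step : ∀ p : Fin (m + 1) × Equiv.Perm (Fin m),
        (∏ i : Fin (m + 1), ∏ j ∈ Finset.Ioi i,
          ((x (Equiv.Perm.decomposeFin.symm p j) - t * x (Equiv.Perm.decomposeFin.symm p i)) /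
           (x (Equiv.Perm.decomposeFin.symm p j) - x (Equiv.Perm.decomposeFin.symm p i))))
        = (∏ w ∈ Finset.univ.erase p.1, ((x w - t * x p.1) / (x w - x p.1))) *
          (∏ i : Fin m, ∏ j ∈ Finset.Ioi i,
            ((x (Equiv.swap 0 p.1 (p.2 j).succ) - t * x (Equiv.swap 0 p.1 (p.2 i).succ)) /
             (x (Equiv.swap 0 p.1 (p.2 j).succ) - x (Equiv.swap 0 p.1 (p.2 i).succ)))) := by
      rintro ⟨v, σ'⟩
      rw [Fin.prod_univ_succ]
      congr 1
      · rw [Fin.prod_Ioi_zero]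
        rw [← prod_comp_swap_succ v (fun w => (x w - t * x v) / (x w - x v))]
        rw [← Equiv.prod_comp σ'
          (fun u => (x (Equiv.swap 0 v u.succ) - t * x v) / (x (Equiv.swap 0 v u.succ) - x v))]
        refine Finset.prod_congr rfl fun j _ => ?_
        simp [Equiv.Perm.decomposeFin_symm_apply_zero, Equiv.Perm.decomposeFin_symm_apply_succ]
      · refine Finset.prod_congr rfl fun i _ => ?_
        rw [Fin.prod_Ioi_succ]
        refine Finset.prod_congr rfl fun j _ => ?_
        simp [Equiv.Perm.decomposeFin_symm_apply_succ]
    rw [Finset.sum_congr rfl fun p _ => step p, Fintype.sum_prod_type]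
    have hy : ∀ v : Fin (m + 1),
        (∑ σ' : Equiv.Perm (Fin m), ∏ i : Fin m, ∏ j ∈ Finset.Ioi i,
          ((x (Equiv.swap 0 v (σ' j).succ) - t * x (Equiv.swap 0 v (σ' i).succ)) /
           (x (Equiv.swap 0 v (σ' j).succ) - x (Equiv.swap 0 v (σ' i).succ))))
        = ∏ k ∈ Finset.range m, ∑ j ∈ Finset.range (k + 1), t ^ j :=
      fun v => ih (fun u => x (Equiv.swap 0 v u.succ))
        (fun a b hab => Fin.succ_injective _ ((Equiv.swap 0 v).injective (hinj hab)))
        (fun u => h0 _)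
    dsimp only
    have hv : ∀ v : Fin (m + 1),
        (∑ σ' : Equiv.Perm (Fin m),
          (∏ w ∈ Finset.univ.erase v, ((x w - t * x v) / (x w - x v))) *
          ∏ i : Fin m, ∏ j ∈ Finset.Ioi i,
            ((x (Equiv.swap 0 v (σ' j).succ) - t * x (Equiv.swap 0 v (σ' i).succ)) /
             (x (Equiv.swap 0 v (σ' j).succ) - x (Equiv.swap 0 v (σ' i).succ))))
        = (∏ w ∈ Finset.univ.erase v, ((x w - t * x v) / (x w - x v))) *
            ∏ k ∈ Finset.range m, ∑ j ∈ Finset.range (k + 1), t ^ j :=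
      fun v => by rw [← Finset.mul_sum, hy v]
    rw [Finset.sum_congr rfl fun v _ => hv v]
    rw [← Finset.sum_mul, key_T t ht x hinj h0, Finset.prod_range_succ, mul_comm]

end GenField


lemma alg_injective : Function.Injective (alg (n := n)) :=
  IsFractionRing.injective _ _

lemma single_ne_zero' (d : Fin n → ℤ) (c : K) (hc : c ≠ 0) :
    (AddMonoidAlgebra.single d c : Lau n) ≠ 0 :=
  fun h => hc (AddMonoidAlgebra.single_eq_zero.mp h)

lemma eu_ne_zero {a b : Fin n} (hab : a ≠ b) : eu a b ≠ 0 := by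
  intro h
  have := congrFun h a
  simp only [eu, Pi.sub_apply, Pi.single_eq_same, Pi.single_eq_of_ne hab, sub_zero,
    Pi.zero_apply] at this
  exact one_ne_zero this

lemma algebraMap_eq_single (c : K) :
    algebraMap K (Lau n) c = AddMonoidAlgebra.single 0 c := by
  rw [AddMonoidAlgebra.coe_algebraMap]
  simp

lemma frac_eq (c : K) (a b : Fin n) (hab : a ≠ b) :
    alg (1 - AddMonoidAlgebra.single (eu a b) c)
      * (alg (1 - AddMonoidAlgebra.single (eu a b) 1))⁻¹
    = (alg (AddMonoidAlgebra.single (Pi.single b 1) 1)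
        - alg (algebraMap K (Lau n) c) * alg (AddMonoidAlgebra.single (Pi.single a 1) 1))
      / (alg (AddMonoidAlgebra.single (Pi.single b 1) 1)
        - alg (AddMonoidAlgebra.single (Pi.single a 1) 1)) := by
  set Xa : FF n := alg (AddMonoidAlgebra.single (Pi.single a 1) (1 : K)) with hXa
  set Xb : FF n := alg (AddMonoidAlgebra.single (Pi.single b 1) (1 : K)) with hXb
  set Tc : FF n := alg (algebraMap K (Lau n) c) with hTc
  set A : FF n := alg (AddMonoidAlgebra.single (eu a b) c) with hA'
  set A1 : FF n := alg (AddMonoidAlgebra.single (eu a b) (1 : K)) with hA1'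
  have hA : A * Xb = Tc * Xa := by
    rw [hA', hXb, hTc, hXa, ← map_mul, ← map_mul, algebraMap_eq_single,
      AddMonoidAlgebra.single_mul_single, AddMonoidAlgebra.single_mul_single]
    congr 1
    all_goals simp [eu]
  have hA1 : A1 * Xb = Xa := by
    rw [hA1', hXb, hXa, ← map_mul, AddMonoidAlgebra.single_mul_single]
    congr 1
    all_goals simp [eu]
  have hAc : A = Tc * A1 := by
    rw [hA', hTc, hA1', ← map_mul, algebraMap_eq_single,
      AddMonoidAlgebra.single_mul_single]
    congr 1
    simp
  have hone : (1 : Lau n) = AddMonoidAlgebra.single 0 1 := AddMonoidAlgebra.one_def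
  have hA1ne : (1 : FF n) - A1 ≠ 0 := by
    rw [sub_ne_zero]
    intro h
    have h2 : (AddMonoidAlgebra.single 0 (1:K) : Lau n) = AddMonoidAlgebra.single (eu a b) 1 := by
      apply alg_injective
      rw [← hone, map_one, h, hA1']
    have := (AddMonoidAlgebra.single_left_injective (one_ne_zero (α := K))) h2
    exact eu_ne_zero hab this.symm
  have hXbXa : Xb - Xa ≠ 0 := by
    rw [sub_ne_zero]
    intro h
    have h2 := alg_injective h.symm
    have := (AddMonoidAlgebra.single_left_injective (one_ne_zero (α := K))) h2
    have := congrFun this a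
    simp [Pi.single_eq_same, Pi.single_eq_of_ne hab] at this
  rw [map_sub, map_sub, map_one, ← hA', ← hA1', ← div_eq_mul_inv,
    div_eq_div_iff hA1ne hXbXa]
  linear_combination -hA + hA1 + Xa * hAc


/-- `P₀ = ∑_{σ ∈ S_n} σ( ∏_{i<j} (1 − q⁻¹ zᵢzⱼ⁻¹)(1 − zᵢzⱼ⁻¹)⁻¹ )` is the constant
`∏_{k=1}^{n} (1 − q^{−k})(1 − q^{−1})⁻¹ ∈ K` (the `q⁻¹`-Poincaré polynomial of `S_n`). -/
theorem Pfun_zero_eq_poincare (n : ℕ) :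
    ∑ σ : Equiv.Perm (Fin n),
      actF σ (∏ i : Fin n, ∏ j ∈ Finset.Ioi i,
        (alg (1 - AddMonoidAlgebra.single (eu i j) q⁻¹)
          * (alg (1 - AddMonoidAlgebra.single (eu i j) 1))⁻¹))
    = alg (algebraMap K (Lau n)
        (∏ k ∈ Finset.range n, ((1 - q⁻¹ ^ (k + 1)) * (1 - q⁻¹)⁻¹))) := by
  classical
  set φ : K →+* FF n := (alg (n := n)).comp (algebraMap K (Lau n)) with hφ
  have hφinj : Function.Injective φ := φ.injective
  set T : FF n := alg (algebraMap K (Lau n) q⁻¹) with hT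
  have hq1 : (q : K) ≠ 1 := by
    intro h
    have h2 : (Polynomial.X : Polynomial ℚ) = 1 := by
      apply RatFunc.algebraMap_injective ℚ
      rw [map_one, RatFunc.algebraMap_X]
      exact h
    simpa using congrArg Polynomial.natDegree h2
  have hqinv1 : (q⁻¹ : K) ≠ 1 := fun h => hq1 (inv_eq_one.mp h)
  have hT1 : T ≠ 1 := by
    intro h
    exact hqinv1 (hφinj (show φ q⁻¹ = φ 1 by rw [map_one]; exact h))
  set Zf : Fin n → FF n := fun i => alg (AddMonoidAlgebra.single (Pi.single i 1) (1 : K))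
    with hZf
  have hZ0 : ∀ i, Zf i ≠ 0 := fun i h =>
    single_ne_zero' (Pi.single i 1) (1 : K) one_ne_zero
      (alg_injective (by rw [map_zero]; exact h))
  have hZinj : Function.Injective Zf := by
    intro a b hab
    by_contra hne
    have h2 := alg_injective hab
    have h3 := (AddMonoidAlgebra.single_left_injective (one_ne_zero (α := K))) h2
    have h4 := congrFun h3 a
    rw [Pi.single_eq_same, Pi.single_eq_of_ne hne] at h4
    exact one_ne_zero h4
  have hactF : ∀ (σ : Equiv.Perm (Fin n)) (u : Lau n), actF σ (alg u) = alg (actL σ u) :=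
    fun σ u => IsFractionRing.ringEquivOfRingEquiv_algebraMap (actL σ).toRingEquiv u
  have hactL : ∀ (σ : Equiv.Perm (Fin n)) (i j : Fin n) (c : K),
      actL σ (1 - AddMonoidAlgebra.single (eu i j) c)
        = 1 - AddMonoidAlgebra.single (eu (σ i) (σ j)) c := by
    intro σ i j c
    rw [map_sub, map_one]
    congr 1
    rw [actL, AddMonoidAlgebra.domCongr_single]
    congr 1
    funext k
    show (eu i j) (σ.symm k) = eu (σ i) (σ j) k
    simp [eu, Pi.single_apply, Equiv.symm_apply_eq]
  have hterm : ∀ σ : Equiv.Perm (Fin n),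
      actF σ (∏ i : Fin n, ∏ j ∈ Finset.Ioi i,
        (alg (1 - AddMonoidAlgebra.single (eu i j) q⁻¹)
          * (alg (1 - AddMonoidAlgebra.single (eu i j) 1))⁻¹))
      = ∏ i : Fin n, ∏ j ∈ Finset.Ioi i,
          ((Zf (σ j) - T * Zf (σ i)) / (Zf (σ j) - Zf (σ i))) := by
    intro σ
    rw [map_prod]
    refine Finset.prod_congr rfl fun i _ => ?_
    rw [map_prod]
    refine Finset.prod_congr rfl fun j hj => ?_
    have hij : σ i ≠ σ j := fun h =>
      absurd (σ.injective h) (ne_of_lt (Finset.mem_Ioi.mp hj))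
    rw [map_mul, map_inv₀, hactF, hactF, hactL, hactL]
    exact frac_eq q⁻¹ (σ i) (σ j) hij
  rw [Finset.sum_congr rfl fun σ _ => hterm σ]
  rw [main_sum T hT1 n Zf hZinj hZ0]
  have hR : alg (algebraMap K (Lau n)
      (∏ k ∈ Finset.range n, ((1 - q⁻¹ ^ (k + 1)) * (1 - q⁻¹)⁻¹)))
      = ∏ k ∈ Finset.range n, ((1 - T ^ (k + 1)) * (1 - T)⁻¹) := by
    rw [show alg (algebraMap K (Lau n)
        (∏ k ∈ Finset.range n, ((1 - q⁻¹ ^ (k + 1)) * (1 - q⁻¹)⁻¹)))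
      = φ (∏ k ∈ Finset.range n, ((1 - q⁻¹ ^ (k + 1)) * (1 - q⁻¹)⁻¹)) from rfl, map_prod]
    refine Finset.prod_congr rfl fun k _ => ?_
    rw [map_mul, map_inv₀, map_sub, map_sub, map_one, map_pow]
    rfl
  rw [hR]
  refine Finset.prod_congr rfl fun k _ => ?_
  have h1 : T - 1 ≠ 0 := sub_ne_zero.mpr hT1
  have h2 : (1 : FF n) - T ≠ 0 := sub_ne_zero.mpr (Ne.symm hT1)
  rw [geom_sum_eq hT1, ← div_eq_mul_inv, div_eq_div_iff h1 h2]
  ring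


end InverseSatake
end
end

section
/- Fix n ≥ 1 and work in the formal power series ring over K = ℚ(q) in the n variables X₁,…,X_{n−1},U. For 1 ≤ i < j ≤ n set m_{ij} := X_i X_{i+1} ⋯ X_{j−1}, and for 1 ≤ i ≤ n set z_i := X_i X_{i+1} ⋯ X_{n−1} · U (so z_n = U). Set δ := (n−1, n−2, …, 1, 0) ∈ ℤ^n, and for σ ∈ S_n let N_σ := ∏_{k=1}^{n−1} X_k^{e_k(σ)} where e_k(σ) = ∑_{i=1}^{k} (δ_i − δ_{σ⁻¹(i)}) (these exponents are nonnegative). Then ∏_{1≤i<j≤n} (1 − m_{ij}) · ∏_{1≤i<j≤n} (1 − q⁻¹ m_{ij})⁻¹ · ∏_{i=1}^{n} (1 − z_i)⁻¹ = ( ∑_{σ∈S_n} sign(σ) · N_σ ) · ∏_{1≤i<j≤n} (1 − q⁻¹ m_{ij})⁻¹ · ∏_{i=1}^{n} (1 − z_i)⁻¹ as formal power series. -/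
noncomputable section

/-- The field `K = ℚ(q)` of rational functions over `ℚ`. -/
local notation "K" => RatFunc ℚ

/-- The variable `q` of `K = ℚ(q)`. -/
local notation "q" => (RatFunc.X : RatFunc ℚ)

namespace LiComparison

variable (m : ℕ)

/-- The `n = m + 1` variables `X₁, …, X_{n−1}, U` of the power series ring: the variable of
index `k < m` is `X_{k+1}`, and the variable of index `m` is `U`. -/
def V (k : Fin (m + 1)) : MvPowerSeries (Fin (m + 1)) K := MvPowerSeries.X k

/-- `m_{ij} = Xᵢ X_{i+1} ⋯ X_{j−1}` (zero-based). -/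
def mon (i j : Fin (m + 1)) : MvPowerSeries (Fin (m + 1)) K :=
  ∏ k ∈ Finset.Ico i j, V m k

/-- `z i = Xᵢ X_{i+1} ⋯ X_{n−1} · U` (zero-based; `z (last) = U`). -/
def z (i : Fin (m + 1)) : MvPowerSeries (Fin (m + 1)) K :=
  ∏ k ∈ Finset.Ici i, V m k

/-- `δ = (n−1, n−2, …, 1, 0) ∈ ℤ^n`, `n = m + 1`. -/
def delta (i : Fin (m + 1)) : ℤ := (m : ℤ) - (i : ℕ)

/-- The exponent `e_k(σ) = ∑_{i≤k} (δᵢ − δ_{σ⁻¹(i)})`. -/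
def e (k : Fin m) (σ : Equiv.Perm (Fin (m + 1))) : ℤ :=
  ∑ i ∈ Finset.Iic k.castSucc, (delta m i - delta m (σ.symm i))

/-- `N_σ = ∏_k X_k^{e_k(σ)}`, realizing the monomial `z^{δ−σδ}`. -/
def N (σ : Equiv.Perm (Fin (m + 1))) : MvPowerSeries (Fin (m + 1)) K :=
  ∏ k : Fin m, V m k.castSucc ^ (e m k σ).toNat

/-! ### Auxiliary machinery -/

/-- Monomial with coefficient `1`. -/
def M (s : Fin (m + 1) →₀ ℕ) : MvPowerSeries (Fin (m + 1)) K :=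
  MvPowerSeries.monomial s 1

lemma M_ne_zero (s : Fin (m + 1) →₀ ℕ) : M m s ≠ 0 := fun h => by
  simpa [M, MvPowerSeries.coeff_monomial_same] using
    congrArg (MvPowerSeries.coeff (R := K) s) h

lemma M_mul (s t : Fin (m + 1) →₀ ℕ) : M m s * M m t = M m (s + t) := by
  simp [M, MvPowerSeries.monomial_mul_monomial]

lemma M_pow (s : Fin (m + 1) →₀ ℕ) (a : ℕ) : M m s ^ a = M m (a • s) := by
  induction a with
  | zero => simp [M, MvPowerSeries.monomial_zero_one]
  | succ a ih => rw [pow_succ, ih, M_mul, succ_nsmul]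

lemma M_prod {α : Type} (S : Finset α) (f : α → (Fin (m + 1) →₀ ℕ)) :
    ∏ i ∈ S, M m (f i) = M m (∑ i ∈ S, f i) := by
  classical
  induction S using Finset.induction with
  | empty => simp [M, MvPowerSeries.monomial_zero_one]
  | @insert a s h ih => rw [Finset.prod_insert h, Finset.sum_insert h, ih, M_mul]

lemma V_eq (k : Fin (m + 1)) : V m k = M m (Finsupp.single k 1) :=
  MvPowerSeries.X_def k

/-- The exponent of `z i`. -/
def zE (i : Fin (m + 1)) : Fin (m + 1) →₀ ℕ := ∑ k ∈ Finset.Ici i, Finsupp.single k 1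

lemma z_eq (i : Fin (m + 1)) : z m i = M m (zE m i) := by
  rw [z, zE, ← M_prod]
  exact Finset.prod_congr rfl fun k _ => V_eq m k

lemma zE_apply (i c : Fin (m + 1)) : zE m i c = if i ≤ c then 1 else 0 := by
  rw [zE, Finset.sum_apply']
  simp [Finsupp.single_apply, Finset.sum_ite_eq, Finset.mem_Ici]

lemma mon_mul_z {i j : Fin (m + 1)} (h : i ≤ j) : mon m i j * z m j = z m i := by
  have hu : Finset.Ico i j ∪ Finset.Ici j = Finset.Ici i := by
    ext x
    simp only [Finset.mem_union, Finset.mem_Ico, Finset.mem_Ici]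
    constructor
    · rintro (⟨h1, _⟩ | h2)
      · exact h1
      · exact le_trans h h2
    · intro hx
      rcases lt_or_ge x j with hl | hl
      · exact Or.inl ⟨hx, hl⟩
      · exact Or.inr hl
  have hd : Disjoint (Finset.Ico i j) (Finset.Ici j) := by
    simp only [Finset.disjoint_left, Finset.mem_Ico, Finset.mem_Ici]
    rintro x ⟨_, h2⟩ h3
    exact absurd h3 (not_le.mpr h2)
  rw [mon, z, z, ← Finset.prod_union hd, hu]

lemma N_eq (σ : Equiv.Perm (Fin (m + 1))) :
    N m σ = M m (∑ k : Fin m, Finsupp.single k.castSucc (e m k σ).toNat) := by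
  rw [N, ← M_prod]
  refine Finset.prod_congr rfl fun k _ => ?_
  rw [V_eq, M_pow, Finsupp.smul_single, smul_eq_mul, mul_one]

lemma sum_range_card_le (T : Finset ℕ) : ∑ i ∈ Finset.range T.card, i ≤ ∑ x ∈ T, x := by
  induction T using Finset.strongInduction with
  | _ T ih =>
    rcases T.eq_empty_or_nonempty with rfl | hT
    · simp
    · have hmem : T.max' hT ∈ T := T.max'_mem hT
      have hsub : T ⊆ Finset.range (T.max' hT + 1) := fun x hx =>
        Finset.mem_range.mpr (Nat.lt_succ_of_le (T.le_max' x hx))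
      have hcard : T.card ≤ T.max' hT + 1 := by
        simpa using Finset.card_le_card hsub
      have herase := ih (T.erase (T.max' hT)) (Finset.erase_ssubset hmem)
      have hc : (T.erase (T.max' hT)).card = T.card - 1 := Finset.card_erase_of_mem hmem
      have hTpos : 1 ≤ T.card := Finset.card_pos.mpr hT
      have h1 : ∑ x ∈ T, x = T.max' hT + ∑ x ∈ T.erase (T.max' hT), x :=
        (Finset.add_sum_erase T id hmem).symm
      calc ∑ i ∈ Finset.range T.card, i
          = ∑ i ∈ Finset.range ((T.card - 1) + 1), i := by rw [Nat.sub_add_cancel hTpos]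
        _ = (T.card - 1) + ∑ i ∈ Finset.range (T.card - 1), i := by
            rw [Finset.sum_range_succ, add_comm]
        _ ≤ T.max' hT + ∑ x ∈ T.erase (T.max' hT), x :=
            Nat.add_le_add (by omega) (hc ▸ herase)
        _ = ∑ x ∈ T, x := h1.symm

lemma sum_Iic_le (σ : Equiv.Perm (Fin (m + 1))) (c : Fin (m + 1)) :
    ∑ i ∈ Finset.Iic c, (i : ℕ) ≤ ∑ i ∈ Finset.Iic c, ((σ.symm i : Fin (m + 1)) : ℕ) := by
  classical
  have hinj : ∀ x ∈ Finset.Iic c, ∀ y ∈ Finset.Iic c,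
      ((σ.symm x : Fin (m + 1)) : ℕ) = ((σ.symm y : Fin (m + 1)) : ℕ) → x = y :=
    fun x _ y _ h => σ.symm.injective (Fin.val_injective h)
  have hcard : ((Finset.Iic c).image fun i => ((σ.symm i : Fin (m + 1)) : ℕ)).card
      = (c : ℕ) + 1 := by
    rw [Finset.card_image_of_injOn hinj, Fin.card_Iic]
  have h1 : ∑ x ∈ (Finset.Iic c).image (fun i => ((σ.symm i : Fin (m + 1)) : ℕ)), x
      = ∑ i ∈ Finset.Iic c, ((σ.symm i : Fin (m + 1)) : ℕ) := Finset.sum_image hinj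
  have himg : (Finset.Iic c).image (fun i : Fin (m + 1) => (i : ℕ))
      = Finset.range ((c : ℕ) + 1) := by
    ext x
    simp only [Finset.mem_image, Finset.mem_Iic, Finset.mem_range]
    constructor
    · rintro ⟨a, ha, rfl⟩
      exact Nat.lt_succ_of_le ha
    · intro hx
      exact ⟨⟨x, lt_of_le_of_lt (Nat.lt_succ_iff.mp hx) c.isLt⟩,
        Fin.le_def.mpr (Nat.lt_succ_iff.mp hx), rfl⟩
  have h0 : ∑ i ∈ Finset.Iic c, (i : ℕ) = ∑ x ∈ Finset.range ((c : ℕ) + 1), x := by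
    rw [← himg, Finset.sum_image (fun x _ y _ h => Fin.val_injective h)]
  rw [h0, ← h1]
  have := sum_range_card_le ((Finset.Iic c).image fun i => ((σ.symm i : Fin (m + 1)) : ℕ))
  rwa [hcard] at this

lemma e_eq (k : Fin m) (σ : Equiv.Perm (Fin (m + 1))) :
    e m k σ = ((∑ i ∈ Finset.Iic k.castSucc, ((σ.symm i : Fin (m + 1)) : ℕ) : ℕ) : ℤ)
      - ((∑ i ∈ Finset.Iic k.castSucc, (i : ℕ) : ℕ) : ℤ) := by
  rw [e]
  push_cast
  rw [← Finset.sum_sub_distrib]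
  refine Finset.sum_congr rfl fun i _ => ?_
  simp only [delta]
  ring

lemma e_nonneg (σ : Equiv.Perm (Fin (m + 1))) (k : Fin m) : 0 ≤ e m k σ := by
  have h := sum_Iic_le m σ k.castSucc
  rw [e_eq]
  omega

lemma zpow_prod (g : Fin (m + 1) → ℕ) :
    ∏ j : Fin (m + 1), z m j ^ g j = M m (∑ j : Fin (m + 1), g j • zE m j) := by
  rw [← M_prod]
  exact Finset.prod_congr rfl fun j _ => by rw [z_eq, M_pow]

lemma Iic_filter (c : Fin (m + 1)) :
    Finset.Iic c = Finset.univ.filter (· ≤ c) := by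
  ext x; simp

lemma zE_sum_apply (g : Fin (m + 1) → ℕ) (c : Fin (m + 1)) :
    (∑ j : Fin (m + 1), g j • zE m j) c = ∑ j ∈ Finset.Iic c, g j := by
  rw [Finset.sum_apply']
  simp only [Finsupp.smul_apply, zE_apply, smul_eq_mul, mul_ite, mul_one, mul_zero]
  rw [Iic_filter, ← Finset.sum_filter]

lemma toNat_add (k : Fin m) (σ : Equiv.Perm (Fin (m + 1))) :
    (e m k σ).toNat + ∑ i ∈ Finset.Iic k.castSucc, (i : ℕ)
      = ∑ i ∈ Finset.Iic k.castSucc, ((σ.symm i : Fin (m + 1)) : ℕ) := by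
  have h := sum_Iic_le m σ k.castSucc
  have h2 := e_eq m k σ
  omega

lemma N_mul (σ : Equiv.Perm (Fin (m + 1))) :
    N m σ * ∏ j : Fin (m + 1), z m j ^ (j : ℕ)
      = ∏ i : Fin (m + 1), z m i ^ ((σ.symm i : Fin (m + 1)) : ℕ) := by
  rw [N_eq, zpow_prod, zpow_prod, M_mul]
  refine congrArg (M m) ?_
  ext c
  rw [Finsupp.add_apply, zE_sum_apply, zE_sum_apply, Finset.sum_apply']
  induction c using Fin.lastCases with
  | last =>
    have h1 : ∀ k : Fin m, (Finsupp.single k.castSucc (e m k σ).toNat) (Fin.last m) = 0 :=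
      fun k => Finsupp.single_eq_of_ne' (Fin.castSucc_lt_last k).ne
    rw [Finset.sum_congr rfl fun k _ => h1 k, Finset.sum_const, smul_zero, zero_add]
    have h2 : Finset.Iic (Fin.last m) = Finset.univ := by
      ext x; simp [Fin.le_last]
    rw [h2]
    exact (Equiv.sum_comp σ.symm (fun i => (i : ℕ))).symm
  | cast k0 =>
    have h1 : ∀ k : Fin m, (Finsupp.single k.castSucc (e m k σ).toNat) k0.castSucc
        = if k = k0 then (e m k σ).toNat else 0 := by
      intro k
      rw [Finsupp.single_apply]
      simp [Fin.castSucc_inj]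
    rw [Finset.sum_congr rfl fun k _ => h1 k, Finset.sum_ite_eq' Finset.univ,
      if_pos (Finset.mem_univ _)]
    exact toNat_add m k0 σ

lemma prod_P : ∏ j : Fin (m + 1), z m j ^ (j : ℕ) ≠ 0 := by
  rw [zpow_prod]
  exact M_ne_zero m _

lemma key :
    (∏ i : Fin (m + 1), ∏ j ∈ Finset.Ioi i, (1 - mon m i j))
      = ∑ σ : Equiv.Perm (Fin (m + 1)), (Equiv.Perm.sign σ : ℤ) • N m σ := by
  classical
  apply mul_right_cancel₀ (prod_P m)
  have hswap : ∀ f : Fin (m + 1) → Fin (m + 1) → MvPowerSeries (Fin (m + 1)) K,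
      (∏ i : Fin (m + 1), ∏ j ∈ Finset.Ioi i, f i j)
        = ∏ j : Fin (m + 1), ∏ i ∈ Finset.Iio j, f i j := by
    intro f
    refine Finset.prod_comm' fun x y => ?_
    simp [and_comm]
  -- LHS
  have hL : (∏ i : Fin (m + 1), ∏ j ∈ Finset.Ioi i, (1 - mon m i j))
        * ∏ j : Fin (m + 1), z m j ^ (j : ℕ)
      = ∏ i : Fin (m + 1), ∏ j ∈ Finset.Ioi i, (z m j - z m i) := by
    rw [hswap, hswap fun i j => z m j - z m i]
    have hP : ∏ j : Fin (m + 1), z m j ^ (j : ℕ)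
        = ∏ j : Fin (m + 1), ∏ _i ∈ Finset.Iio j, z m j := by
      refine Finset.prod_congr rfl fun j _ => ?_
      rw [Finset.prod_const, Fin.card_Iio]
    rw [hP, ← Finset.prod_mul_distrib]
    refine Finset.prod_congr rfl fun j _ => ?_
    rw [← Finset.prod_mul_distrib]
    refine Finset.prod_congr rfl fun i hi => ?_
    rw [sub_mul, one_mul, mon_mul_z m (le_of_lt (Finset.mem_Iio.mp hi))]
  -- RHS
  have hR : (∑ σ : Equiv.Perm (Fin (m + 1)), (Equiv.Perm.sign σ : ℤ) • N m σ)
        * ∏ j : Fin (m + 1), z m j ^ (j : ℕ)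
      = ∏ i : Fin (m + 1), ∏ j ∈ Finset.Ioi i, (z m j - z m i) := by
    rw [← Matrix.det_vandermonde (z m), Matrix.det_apply, Finset.sum_mul]
    refine Finset.sum_congr rfl fun σ _ => ?_
    rw [smul_mul_assoc, N_mul, Units.smul_def]
    congr 1
    rw [← Equiv.prod_comp σ (fun i => z m i ^ ((σ.symm i : Fin (m + 1)) : ℕ))]
    refine Finset.prod_congr rfl fun i _ => ?_
    rw [Equiv.symm_apply_apply]
    rfl
  rw [hL, hR]

/-- The comparison of the author's inverse Satake formula with Wen-Wei Li's formula for the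
standard `L`-function of `GL_n`, `n = m + 1`: the exponents `e_k(σ)` are nonnegative, and
`∏_{i<j}(1 − m_{ij}) · ∏_{i<j}(1 − q⁻¹m_{ij})⁻¹ · ∏_i(1 − z_i)⁻¹
  = (∑_σ sign(σ) N_σ) · ∏_{i<j}(1 − q⁻¹m_{ij})⁻¹ · ∏_i(1 − z_i)⁻¹`
as formal power series (via the Weyl denominator formula). -/
theorem inverse_satake_eq_WWLi :
    (∀ (σ : Equiv.Perm (Fin (m + 1))) (k : Fin m), 0 ≤ e m k σ) ∧
    (∏ i : Fin (m + 1), ∏ j ∈ Finset.Ioi i, (1 - mon m i j))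
        * (∏ i : Fin (m + 1), ∏ j ∈ Finset.Ioi i,
            (1 - MvPowerSeries.C (σ := Fin (m + 1)) (R := K) q⁻¹ * mon m i j)⁻¹)
        * ∏ i : Fin (m + 1), (1 - z m i)⁻¹
      = (∑ σ : Equiv.Perm (Fin (m + 1)), (Equiv.Perm.sign σ : ℤ) • N m σ)
        * (∏ i : Fin (m + 1), ∏ j ∈ Finset.Ioi i,
            (1 - MvPowerSeries.C (σ := Fin (m + 1)) (R := K) q⁻¹ * mon m i j)⁻¹)
        * ∏ i : Fin (m + 1), (1 - z m i)⁻¹ := by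
  exact ⟨e_nonneg m, by rw [key]⟩

end LiComparison
end
end
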